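/- arXiv:1706.05976 — 2 statements merged into one kernel-verified Lean document; each statement's English description precedes it below -/
import Mathlib

section
/- Let D ⊂ ℝ^d be a bounded Lipschitz domain, η ∈ ℕ, 1 ≤ p, p_1, …, p_r ≤ ∞ with q := (p^{-1} + p_1^{-1} + ⋯ + p_r^{-1})^{-1} ≥ 1, and let X_1, …, X_r, Y be Banach spaces. For M ∈ W^{η,p}(D; B(X_1, …, X_r; Y)) and v_j ∈ W^{η,p_j}(D; X_j) for j = 1, …, r, the pointwise application M v_1 ⋯ v_r lies in W^{η,q}(D; Y) and ‖M v_1 ⋯ v_r‖_{η,q,D;Y} ≤ ‖M‖_{η,p,D;B(X_1,…,X_r;Y)} · ∏_{j=1}^r ‖v_j‖_{η,p_j,D;X_j}. -/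
open MeasureTheory Finset
open scoped ENNReal RealInnerProductSpace

noncomputable section

/-- `ℝ^n` with the Euclidean structure. -/
abbrev Euc (n : ℕ) : Type := EuclideanSpace ℝ (Fin n)

/-- Partial derivative in the `i`-th coordinate direction. -/
noncomputable def pder {n : ℕ} {X : Type*} [NormedAddCommGroup X] [NormedSpace ℝ X]
    (i : Fin n) (f : Euc n → X) : Euc n → X :=
  fun x => fderiv ℝ f x (EuclideanSpace.single i 1)

/-- Iterated partial derivative `∂^α` for a multi-index `α`. -/
noncomputable def mder {n : ℕ} {X : Type*} [NormedAddCommGroup X] [NormedSpace ℝ X]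
    (α : Fin n → ℕ) (f : Euc n → X) : Euc n → X :=
  ((List.ofFn fun i : Fin n => (pder i)^[α i]).foldr (· ∘ ·) id) f

/-- The finset of multi-indices `α ∈ ℕ^n` with `|α| ≤ η`. -/
def mIdx (n η : ℕ) : Finset (Fin n → ℕ) :=
  (Fintype.piFinset fun _ : Fin n => Finset.range (η + 1)).filter fun α => (∑ i, α i) ≤ η

/-- Multi-index factorial `α!`. -/
def mfact {n : ℕ} (α : Fin n → ℕ) : ℕ := ∏ i, Nat.factorial (α i)

/-- Order `|α|` of a multi-index. -/
def mdeg {n : ℕ} (α : Fin n → ℕ) : ℕ := ∑ i, α i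

/-- The Sobolev–Bochner norm `‖f‖_{η,p,D;X} = ∑_{|α|≤η} (1/α!) ‖∂^α f‖_{L^p(μ;X)}`. -/
noncomputable def sobNorm {n : ℕ} {X : Type*} [NormedAddCommGroup X] [NormedSpace ℝ X]
    (η : ℕ) (p : ℝ≥0∞) (μ : Measure (Euc n)) (f : Euc n → X) : ℝ :=
  ∑ α ∈ mIdx n η, ((mfact α : ℝ))⁻¹ * (eLpNorm (mder α f) p μ).toReal

/-- Membership in the Sobolev–Bochner space `W^{η,p}(D;X)`. -/
def MemW {n : ℕ} {X : Type*} [NormedAddCommGroup X] [NormedSpace ℝ X]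
    (η : ℕ) (p : ℝ≥0∞) (μ : Measure (Euc n)) (f : Euc n → X) : Prop :=
  ∀ α ∈ mIdx n η, MemLp (mder α f) p μ

/-- Parametric derivative `∂_y^α u` of a parametrised field. -/
noncomputable def pyder {m n : ℕ} {X : Type*} [NormedAddCommGroup X] [NormedSpace ℝ X]
    (α : Fin m → ℕ) (u : Euc m → Euc n → X) : Euc m → Euc n → X :=
  fun y x => mder α (fun y' => u y' x) y

/-- The norm `⦀u⦀_{η,p,D;X} := ess sup_{y} ‖u[y]‖_{η,p,D;X}`. -/
noncomputable def tnorm {m n : ℕ} {X : Type*} [NormedAddCommGroup X] [NormedSpace ℝ X]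
    (η : ℕ) (p : ℝ≥0∞) (μ : Measure (Euc n)) (P : Measure (Euc m))
    (u : Euc m → Euc n → X) : ℝ :=
  (essSup (fun y => ENNReal.ofReal (sobNorm η p μ (u y))) P).toReal

/-- Membership in `L^∞_{ℙ_y}(□; W^{η,p}(D;X))`. -/
def MemLW {m n : ℕ} {X : Type*} [NormedAddCommGroup X] [NormedSpace ℝ X]
    (η : ℕ) (p : ℝ≥0∞) (μ : Measure (Euc n)) (P : Measure (Euc m))
    (u : Euc m → Euc n → X) : Prop :=
  (∀ᵐ y ∂P, MemW η p μ (u y)) ∧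
    essSup (fun y => ENNReal.ofReal (sobNorm η p μ (u y))) P < ⊤

/-- The parameter box `□ = [-1,1]^m`. -/
def box (m : ℕ) : Set (Euc m) := {y | ∀ i, y i ∈ Set.Icc (-1 : ℝ) 1}

/-- The finset of multi-indices `β ≤ ν` (componentwise). -/
def mIic {m : ℕ} (ν : Fin m → ℕ) : Finset (Fin m → ℕ) :=
  Fintype.piFinset fun i => Finset.range (ν i + 1)

/-- Multi-index binomial coefficient. -/
def mchoose {m : ℕ} (α β : Fin m → ℕ) : ℕ := ∏ i, Nat.choose (α i) (β i)



section Combinatorics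

variable {K : Type*} [Fintype K] [DecidableEq K]

lemma prod_factorial_ne_zero (t : K → ℕ) : (∏ k, (t k).factorial) ≠ 0 :=
  Finset.prod_ne_zero_iff.2 fun k _ => (Nat.factorial_pos _).ne'

lemma multinomial_pascal (t : K → ℕ) (h : ∑ k, t k ≠ 0) :
    (∑ k, if t k ≠ 0 then Nat.multinomial Finset.univ (Function.update t k (t k - 1)) else 0)
      = Nat.multinomial Finset.univ t := by
  have hP := prod_factorial_ne_zero t
  refine Nat.eq_of_mul_eq_mul_left (Nat.pos_of_ne_zero hP) ?_
  rw [Nat.multinomial_spec, Finset.mul_sum]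
  have hterm : ∀ k : K,
      ((∏ k', (t k').factorial) *
        if t k ≠ 0 then Nat.multinomial Finset.univ (Function.update t k (t k - 1)) else 0)
        = t k * ((∑ k', t k') - 1).factorial := by
    intro k
    by_cases hk : t k = 0
    · simp [hk]
    · rw [if_pos hk]
      set u := Function.update t k (t k - 1) with hu
      have hA : (∏ k', (u k').factorial)
          = (t k - 1).factorial * ∏ k' ∈ Finset.univ.erase k, (t k').factorial := by
        rw [← Finset.mul_prod_erase Finset.univ (fun k' => (u k').factorial) (Finset.mem_univ k)]
        have : ∀ k' ∈ Finset.univ.erase k, (u k').factorial = (t k').factorial := by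
          intro k' hk'
          rw [hu, Function.update_of_ne (Finset.ne_of_mem_erase hk')]
        rw [Finset.prod_congr rfl this, hu, Function.update_self]
      have hB : (∏ k', (t k').factorial)
          = (t k).factorial * ∏ k' ∈ Finset.univ.erase k, (t k').factorial := by
        rw [← Finset.mul_prod_erase Finset.univ (fun k' => (t k').factorial) (Finset.mem_univ k)]
      have hC : (∑ k', u k') = (∑ k', t k') - 1 := by
        have h1 : (∑ k', u k') = t k - 1 + ∑ k' ∈ Finset.univ \ {k}, t k' := by
          rw [hu]; exact Finset.sum_update_of_mem (Finset.mem_univ k) t _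
        have h2 : (∑ k', t k') = t k + ∑ k' ∈ Finset.univ \ {k}, t k' := by
          nth_rewrite 1 [show t = Function.update t k (t k) from (Function.update_eq_self k t).symm]
          exact Finset.sum_update_of_mem (Finset.mem_univ k) t _
        rw [h1, h2]
        omega
      calc (∏ k', (t k').factorial) * Nat.multinomial Finset.univ u
          = t k * ((∏ k', (u k').factorial) * Nat.multinomial Finset.univ u) := by
            rw [hA, hB, ← mul_assoc, ← mul_assoc,
              Nat.mul_factorial_pred hk]
        _ = t k * ((∑ k', t k') - 1).factorial := by
            rw [Nat.multinomial_spec, hC]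
  rw [Finset.sum_congr rfl fun k _ => hterm k, ← Finset.sum_mul]
  exact Nat.mul_factorial_pred h

end Combinatorics

section MderStruct

variable {d : ℕ} {Z : Type*} [NormedAddCommGroup Z] [NormedSpace ℝ Z]

/-- Composition of iterated partial derivatives along a list of directions. -/
noncomputable def compList (l : List (Fin d)) (c : Fin d → ℕ) (f : Euc d → Z) : Euc d → Z :=
  ((l.map fun i => (pder i)^[c i]).foldr (· ∘ ·) id) f

lemma compList_nil (c : Fin d → ℕ) (f : Euc d → Z) : compList [] c f = f := rfl

lemma compList_cons (a : Fin d) (l : List (Fin d)) (c : Fin d → ℕ) (f : Euc d → Z) :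
    compList (a :: l) c f = (pder a)^[c a] (compList l c f) := rfl

lemma mder_eq_compList (c : Fin d → ℕ) (f : Euc d → Z) :
    mder c f = compList (List.finRange d) c f := by
  rw [mder, compList, List.ofFn_eq_map]

lemma compList_congr {l : List (Fin d)} {c c' : Fin d → ℕ} (f : Euc d → Z)
    (h : ∀ j ∈ l, c j = c' j) : compList l c f = compList l c' f := by
  induction l with
  | nil => rfl
  | cons a l ih =>
    rw [compList_cons, compList_cons, ih (fun j hj => h j (List.mem_cons_of_mem a hj)),
      h a List.mem_cons_self]

lemma mder_zero (f : Euc d → Z) : mder (fun _ => 0) f = f := by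
  rw [mder_eq_compList]
  induction (List.finRange d) with
  | nil => rfl
  | cons a l ih => rw [compList_cons, ih]; rfl

lemma pder_compList {i : Fin d} {β : Fin d → ℕ} (f : Euc d → Z) :
    ∀ {l : List (Fin d)}, l.Pairwise (· < ·) → i ∈ l → (∀ j, j < i → β j = 0) →
      pder i (compList l β f) = compList l (Function.update β i (β i + 1)) f := by
  intro l
  induction l with
  | nil => intro _ h; exact absurd h List.not_mem_nil
  | cons a l ih =>
    intro hp hmem hβ
    rcases List.mem_cons.1 hmem with rfl | hmem'
    · rw [compList_cons, compList_cons, Function.update_self,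
        compList_congr (c := Function.update β i (β i + 1)) (c' := β) f
          (fun j hj => Function.update_of_ne (List.rel_of_pairwise_cons hp hj).ne' _ _),
        Function.iterate_succ_apply']
    · have hai : a < i := List.rel_of_pairwise_cons hp hmem'
      rw [compList_cons, compList_cons, hβ a hai, Function.update_of_ne hai.ne _ _, hβ a hai]
      simp only [Function.iterate_zero, id]
      exact ih (List.Pairwise.of_cons hp) hmem' hβ

lemma pder_mder {i : Fin d} {β : Fin d → ℕ} (f : Euc d → Z) (hβ : ∀ j, j < i → β j = 0) :
    pder i (mder β f) = mder (Function.update β i (β i + 1)) f := by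
  rw [mder_eq_compList, mder_eq_compList]
  exact pder_compList f (List.pairwise_lt_finRange d) (List.mem_finRange i) hβ

lemma exists_peel {α : Fin d → ℕ} (h : mdeg α ≠ 0) :
    ∃ (i : Fin d) (β : Fin d → ℕ), (∀ j, j < i → β j = 0) ∧
      α = Function.update β i (β i + 1) ∧ mdeg β + 1 = mdeg α := by
  have hne : (Finset.univ.filter fun j => α j ≠ 0).Nonempty := by
    by_contra hc
    rw [Finset.not_nonempty_iff_eq_empty, Finset.filter_eq_empty_iff] at hc
    refine h (Finset.sum_eq_zero fun j hj => ?_)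
    have := hc (Finset.mem_univ j); simpa using this
  obtain ⟨i, hi, hmin⟩ : ∃ i : Fin d, α i ≠ 0 ∧ ∀ j, j < i → α j = 0 := by
    refine ⟨(Finset.univ.filter fun j => α j ≠ 0).min' hne, ?_, ?_⟩
    · exact (Finset.mem_filter.1 ((Finset.univ.filter fun j => α j ≠ 0).min'_mem hne)).2
    · intro j hj; by_contra hc
      exact absurd hj
        (not_lt.2 (Finset.min'_le _ j (Finset.mem_filter.2 ⟨Finset.mem_univ j, hc⟩)))
  refine ⟨i, Function.update α i (α i - 1), ?_, ?_, ?_⟩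
  · intro j hj; rw [Function.update_of_ne hj.ne]; exact hmin j hj
  · funext j
    by_cases hji : j = i
    · subst hji; rw [Function.update_self, Function.update_self]; omega
    · rw [Function.update_of_ne hji, Function.update_of_ne hji]
  · have h1 := Finset.sum_update_of_mem (Finset.mem_univ i) α (α i - 1)
    have h2 : (∑ j, α j) = α i + ∑ j ∈ Finset.univ \ {i}, α j := by
      nth_rewrite 1 [show α = Function.update α i (α i) from (Function.update_eq_self i α).symm]
      exact Finset.sum_update_of_mem (Finset.mem_univ i) α _
    simp only [mdeg]
    rw [h1, h2]
    omega

lemma contDiff_pder {f : Euc d → Z} {m : ℕ} (i : Fin d)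
    (hf : ContDiff ℝ ((m + 1 : ℕ) : ℕ∞) f) : ContDiff ℝ (m : ℕ∞) (pder i f) := by
  have h : pder i f = (fun L : Euc d →L[ℝ] Z => L (EuclideanSpace.single i 1)) ∘ fderiv ℝ f := rfl
  rw [h]
  have h2 : ContDiff ℝ (m : ℕ∞) (fderiv ℝ f) := hf.fderiv_right (by exact_mod_cast le_rfl)
  exact (ContinuousLinearMap.apply ℝ Z (EuclideanSpace.single i 1)).contDiff.comp h2

lemma contDiff_mder_aux {f : Euc d → Z} {η : ℕ} (hf : ContDiff ℝ (η : ℕ∞) f) :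
    ∀ (n : ℕ) (γ : Fin d → ℕ) (m : ℕ), mdeg γ ≤ n → mdeg γ + m ≤ η →
      ContDiff ℝ (m : ℕ∞) (mder γ f) := by
  have base : ∀ (γ : Fin d → ℕ) (m : ℕ), mdeg γ = 0 → m ≤ η → ContDiff ℝ (m : ℕ∞) (mder γ f) := by
    intro γ m h0 hm
    have hγ : γ = fun _ => 0 := by
      funext j
      exact Finset.sum_eq_zero_iff.1 h0 j (Finset.mem_univ j)
    rw [hγ, mder_zero]
    exact hf.of_le (by exact_mod_cast hm)
  intro n
  induction n with
  | zero => intro γ m h0 hm; exact base γ m (Nat.le_zero.1 h0) (by omega)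
  | succ n ih =>
    intro γ m h0 hm
    by_cases hγ : mdeg γ = 0
    · exact base γ m hγ (by omega)
    · obtain ⟨i, β, hβ0, hγeq, hdeg⟩ := exists_peel hγ
      rw [hγeq, ← pder_mder f hβ0]
      exact contDiff_pder i (ih β (m + 1) (by omega) (by omega))

lemma contDiff_mder {f : Euc d → Z} {η : ℕ} (hf : ContDiff ℝ (η : ℕ∞) f) (γ : Fin d → ℕ)
    (m : ℕ) (h : mdeg γ + m ≤ η) : ContDiff ℝ (m : ℕ∞) (mder γ f) :=
  contDiff_mder_aux hf (mdeg γ) γ m le_rfl h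

lemma continuous_mder {f : Euc d → Z} {η : ℕ} (hf : ContDiff ℝ (η : ℕ∞) f) (γ : Fin d → ℕ)
    (h : mdeg γ ≤ η) : Continuous (mder γ f) :=
  (contDiff_mder hf γ 0 (by omega)).continuous

lemma differentiable_mder {f : Euc d → Z} {η : ℕ} (hf : ContDiff ℝ (η : ℕ∞) f) (γ : Fin d → ℕ)
    (h : mdeg γ + 1 ≤ η) : Differentiable ℝ (mder γ f) :=
  (contDiff_mder hf γ 1 h).differentiable (by norm_num)

end MderStruct

section Decomp

variable {d r : ℕ}

/-- decompositions of a multi-index `α` into `r+1` parts -/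
def decompSet (α : Fin d → ℕ) : Finset (Fin (r + 1) → Fin d → ℕ) :=
  (Fintype.piFinset fun _ : Fin (r + 1) => mIic α).filter fun B => (∑ k, B k) = α

lemma mem_decompSet {α : Fin d → ℕ} {B : Fin (r + 1) → Fin d → ℕ} :
    B ∈ decompSet α ↔ (∑ k, B k) = α := by
  constructor
  · exact fun h => (Finset.mem_filter.1 h).2
  · intro h
    refine Finset.mem_filter.2 ⟨Fintype.mem_piFinset.2 fun k => ?_, h⟩
    refine Fintype.mem_piFinset.2 fun i => ?_
    rw [Finset.mem_range, Nat.lt_succ_iff]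
    calc B k i ≤ ∑ k', B k' i :=
          Finset.single_le_sum (f := fun k' => B k' i) (fun k' _ => Nat.zero_le _)
            (Finset.mem_univ k)
      _ = (∑ k', B k') i := (Finset.sum_apply _ _ _).symm
      _ = α i := by rw [h]

lemma mdeg_comp_le {α : Fin d → ℕ} {B : Fin (r + 1) → Fin d → ℕ}
    (h : (∑ k, B k) = α) (k : Fin (r + 1)) : mdeg (B k) ≤ mdeg α := by
  have h1 : mdeg α = ∑ k', mdeg (B k') := by
    simp only [mdeg, ← h, Finset.sum_apply]
    rw [Finset.sum_comm]
  rw [h1]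
  exact Finset.single_le_sum (f := fun k' => mdeg (B k')) (fun k' _ => Nat.zero_le _)
    (Finset.mem_univ k)

lemma comp_eq_zero {β : Fin d → ℕ} {B : Fin (r + 1) → Fin d → ℕ}
    (h : (∑ k, B k) = β) {j : Fin d} (hj : β j = 0) (k : Fin (r + 1)) : B k j = 0 := by
  have : (∑ k', B k' j) = 0 := by rw [← Finset.sum_apply, h]; exact hj
  exact Finset.sum_eq_zero_iff.1 this k (Finset.mem_univ k)

/-- product of multinomial coefficients for a decomposition -/
def coefB (B : Fin (r + 1) → Fin d → ℕ) : ℕ :=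
  ∏ i, Nat.multinomial Finset.univ fun k => B k i

lemma coefB_ne_zero (B : Fin (r + 1) → Fin d → ℕ) : coefB B ≠ 0 :=
  Finset.prod_ne_zero_iff.2 fun i _ => (Nat.multinomial_pos _ _).ne'

lemma coefB_mul_prod_mfact {α : Fin d → ℕ} {B : Fin (r + 1) → Fin d → ℕ}
    (h : (∑ k, B k) = α) : coefB B * ∏ k, mfact (B k) = mfact α := by
  unfold coefB mfact
  rw [Finset.prod_comm, ← Finset.prod_mul_distrib]
  refine Finset.prod_congr rfl fun i _ => ?_
  rw [mul_comm, Nat.multinomial_spec]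
  congr 1
  rw [← Finset.sum_apply, h]

/-- increment slot `k` of the decomposition in direction `i` -/
def bump (i : Fin d) (B : Fin (r + 1) → Fin d → ℕ) (k : Fin (r + 1)) :
    Fin (r + 1) → Fin d → ℕ :=
  Function.update B k (Function.update (B k) i (B k i + 1))

/-- decrement slot `k` of the decomposition in direction `i` -/
def unbump (i : Fin d) (B : Fin (r + 1) → Fin d → ℕ) (k : Fin (r + 1)) :
    Fin (r + 1) → Fin d → ℕ :=
  Function.update B k (Function.update (B k) i (B k i - 1))

lemma bump_apply (i : Fin d) (B : Fin (r + 1) → Fin d → ℕ) (k k' : Fin (r + 1)) (j : Fin d) :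
    bump i B k k' j = B k' j + if k' = k ∧ j = i then 1 else 0 := by
  unfold bump
  rcases eq_or_ne k' k with rfl | hk
  · rw [Function.update_self]
    rcases eq_or_ne j i with rfl | hj
    · simp
    · simp [hj]
  · rw [Function.update_of_ne hk]
    simp [hk]

lemma sum_bump (i : Fin d) (B : Fin (r + 1) → Fin d → ℕ) (k : Fin (r + 1)) :
    (∑ k', bump i B k k') = Function.update (∑ k', B k') i ((∑ k', B k') i + 1) := by
  funext j
  rw [Finset.sum_apply, Function.update_apply, Finset.sum_apply,
    Finset.sum_congr rfl fun k' _ => bump_apply i B k k' j, Finset.sum_add_distrib]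
  rcases eq_or_ne j i with rfl | hj
  · simp
  · simp [hj]

lemma unbump_bump (i : Fin d) (B : Fin (r + 1) → Fin d → ℕ) (k : Fin (r + 1)) :
    unbump i (bump i B k) k = B := by
  funext k' j
  unfold unbump bump
  rcases eq_or_ne k' k with rfl | hk
  · rw [Function.update_self, Function.update_self]
    rcases eq_or_ne j i with rfl | hj
    · rw [Function.update_self, Function.update_self]; omega
    · rw [Function.update_of_ne hj, Function.update_of_ne hj]
  · rw [Function.update_of_ne hk, Function.update_of_ne hk]

lemma bump_unbump (i : Fin d) (B : Fin (r + 1) → Fin d → ℕ) (k : Fin (r + 1))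
    (h : B k i ≠ 0) : bump i (unbump i B k) k = B := by
  funext k' j
  unfold unbump bump
  rcases eq_or_ne k' k with rfl | hk
  · rw [Function.update_self, Function.update_self]
    rcases eq_or_ne j i with rfl | hj
    · rw [Function.update_self, Function.update_self]; omega
    · rw [Function.update_of_ne hj, Function.update_of_ne hj]
  · rw [Function.update_of_ne hk, Function.update_of_ne hk]

lemma sum_unbump (i : Fin d) (B : Fin (r + 1) → Fin d → ℕ) (k : Fin (r + 1))
    (h : B k i ≠ 0) :
    (∑ k', unbump i B k k') = Function.update (∑ k', B k') i ((∑ k', B k') i - 1) := by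
  have h1 := sum_bump i (unbump i B k) k
  rw [bump_unbump i B k h] at h1
  funext j
  have h2 := congrFun h1 j
  by_cases hj : j = i
  · subst hj
    rw [Function.update_self] at h2 ⊢
    omega
  · rw [Function.update_of_ne hj] at h2 ⊢
    omega

lemma coefB_pascal {α : Fin d → ℕ} {i : Fin d} (B : Fin (r + 1) → Fin d → ℕ)
    (hB : (∑ k, B k) = α) (hαi : α i ≠ 0) :
    (∑ k, if B k i ≠ 0 then coefB (unbump i B k) else 0) = coefB B := by
  have hcol : ∀ k, (fun k' => unbump i B k k' i)
      = Function.update (fun k' => B k' i) k (B k i - 1) := by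
    intro k; funext k'
    unfold unbump
    rcases eq_or_ne k' k with rfl | hk
    · rw [Function.update_self, Function.update_self, Function.update_self]
    · rw [Function.update_of_ne hk, Function.update_of_ne hk]
  have hcoef : ∀ k, coefB (unbump i B k)
      = Nat.multinomial Finset.univ (Function.update (fun k' => B k' i) k (B k i - 1))
        * ∏ i' ∈ Finset.univ.erase i, Nat.multinomial Finset.univ fun k' => B k' i' := by
    intro k
    unfold coefB
    rw [← Finset.mul_prod_erase Finset.univ _ (Finset.mem_univ i), hcol k]
    congr 1
    refine Finset.prod_congr rfl fun i' hi' => ?_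
    congr 1
    funext k'
    unfold unbump
    rcases eq_or_ne k' k with rfl | hk
    · rw [Function.update_self, Function.update_of_ne (Finset.ne_of_mem_erase hi')]
    · rw [Function.update_of_ne hk]
  have hsum : (∑ k', B k' i) ≠ 0 := by
    intro hc
    apply hαi
    rw [← hB, Finset.sum_apply]
    exact hc
  calc (∑ k, if B k i ≠ 0 then coefB (unbump i B k) else 0)
      = (∑ k, if B k i ≠ 0 then Nat.multinomial Finset.univ
          (Function.update (fun k' => B k' i) k (B k i - 1)) else 0)
          * ∏ i' ∈ Finset.univ.erase i, Nat.multinomial Finset.univ fun k' => B k' i' := by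
        rw [Finset.sum_mul]
        refine Finset.sum_congr rfl fun k _ => ?_
        rw [ite_mul, zero_mul]
        by_cases hk : B k i ≠ 0
        · rw [if_pos hk, if_pos hk, hcoef k]
        · rw [if_neg hk, if_neg hk]
    _ = coefB B := by
        rw [multinomial_pascal (fun k' => B k' i) hsum, coefB,
          Finset.mul_prod_erase Finset.univ
            (fun i' => Nat.multinomial Finset.univ fun k' => B k' i') (Finset.mem_univ i)]

end Decomp

section Multi

variable {d r : ℕ} {X : Fin r → Type*} [∀ j, NormedAddCommGroup (X j)]
  [∀ j, NormedSpace ℝ (X j)] {Y : Type*} [NormedAddCommGroup Y] [NormedSpace ℝ Y]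

lemma hasFDerivAt_multi {A : Euc d → ContinuousMultilinearMap ℝ X Y}
    {A' : Euc d →L[ℝ] ContinuousMultilinearMap ℝ X Y} {u : ∀ j, Euc d → X j}
    {u' : ∀ j, Euc d →L[ℝ] X j} {x : Euc d}
    (hA : HasFDerivAt A A' x) (hu : ∀ j, HasFDerivAt (u j) (u' j) x) :
    ∃ D : Euc d →L[ℝ] Y, HasFDerivAt (fun y => A y fun j => u j y) D x ∧
      ∀ w, D w = A' w (fun j => u j x)
        + ∑ k, A x (Function.update (fun j => u j x) k (u' k w)) := by
  classical
  have h1 := ContinuousLinearMap.hasFDerivAt_uncurry_of_multilinear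
    (ContinuousLinearMap.id ℝ (ContinuousMultilinearMap ℝ X Y)) (A x, fun j => u j x)
  have h2 : HasFDerivAt (fun y => (A y, fun j => u j y))
      ((A'.prod (ContinuousLinearMap.pi u'))) x := HasFDerivAt.prodMk hA (hasFDerivAt_pi.2 hu)
  have h3 := h1.comp x h2
  refine ⟨_, h3, fun w => ?_⟩
  simp [ContinuousLinearMap.flipMultilinear_apply_apply]

/-- The basic product-type term appearing in the Leibniz expansion. -/
noncomputable def Tmap (M : Euc d → ContinuousMultilinearMap ℝ X Y) (v : ∀ j, Euc d → X j)
    (B : Fin (r + 1) → Fin d → ℕ) : Euc d → Y :=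
  fun x => mder (B 0) M x fun j => mder (B j.succ) (v j) x

variable {M : Euc d → ContinuousMultilinearMap ℝ X Y} {v : ∀ j, Euc d → X j}

lemma continuous_Tmap {η : ℕ} (hM : ContDiff ℝ (η : ℕ∞) M)
    (hv : ∀ j, ContDiff ℝ (η : ℕ∞) (v j)) (B : Fin (r + 1) → Fin d → ℕ)
    (hB : ∀ k, mdeg (B k) ≤ η) : Continuous (Tmap M v B) := by
  have h1 : Continuous (mder (B 0) M) := continuous_mder hM _ (hB 0)
  have h2 : ∀ j, Continuous (mder (B j.succ) (v j)) :=
    fun j => continuous_mder (hv j) _ (hB _)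
  exact ContinuousEval.continuous_eval.comp (h1.prodMk (continuous_pi h2))

lemma Tmap_bump_zero (i : Fin d) (B : Fin (r + 1) → Fin d → ℕ) :
    Tmap M v (bump i B 0)
      = fun x => mder (Function.update (B 0) i (B 0 i + 1)) M x
          fun j => mder (B j.succ) (v j) x := by
  funext x
  unfold Tmap bump
  rw [Function.update_self]
  exact congrArg _ (funext fun j => by
    rw [Function.update_of_ne (Fin.succ_ne_zero j)])

lemma Tmap_bump_succ (i : Fin d) (B : Fin (r + 1) → Fin d → ℕ) (j0 : Fin r) :
    Tmap M v (bump i B j0.succ)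
      = fun x => mder (B 0) M x
          (Function.update (fun j => mder (B j.succ) (v j) x) j0
            (mder (Function.update (B j0.succ) i (B j0.succ i + 1)) (v j0) x)) := by
  funext x
  unfold Tmap bump
  rw [Function.update_of_ne (Fin.succ_ne_zero j0).symm]
  refine congrArg _ (funext fun j => ?_)
  by_cases h : j = j0
  · subst h
    rw [Function.update_self, Function.update_self]
  · rw [Function.update_of_ne (fun h' => h (Fin.succ_injective _ h')),
      Function.update_of_ne h]

lemma pder_Tmap {η : ℕ} (hM : ContDiff ℝ (η : ℕ∞) M)
    (hv : ∀ j, ContDiff ℝ (η : ℕ∞) (v j)) (i : Fin d) (B : Fin (r + 1) → Fin d → ℕ)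
    (hdeg : ∀ k, mdeg (B k) + 1 ≤ η) (h0 : ∀ k j, j < i → B k j = 0) :
    pder i (Tmap M v B) = fun x => ∑ k, Tmap M v (bump i B k) x := by
  funext x
  obtain ⟨D, hD, hDw⟩ := hasFDerivAt_multi
    ((differentiable_mder hM (B 0) (hdeg 0)) x).hasFDerivAt
    (fun j => ((differentiable_mder (hv j) (B j.succ) (hdeg _)) x).hasFDerivAt)
  have hp : pder i (Tmap M v B) x = D (EuclideanSpace.single i 1) := by
    show fderiv ℝ (Tmap M v B) x (EuclideanSpace.single i 1) = _
    rw [show Tmap M v B = fun y => mder (B 0) M y fun j => mder (B j.succ) (v j) y from rfl,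
      hD.fderiv]
  rw [hp, hDw, Fin.sum_univ_succ, Tmap_bump_zero]
  congr 1
  · have h1 : fderiv ℝ (mder (B 0) M) x (EuclideanSpace.single i 1)
        = pder i (mder (B 0) M) x := rfl
    rw [h1, pder_mder M (fun j hj => h0 0 j hj)]
  · refine Finset.sum_congr rfl fun j0 _ => ?_
    rw [Tmap_bump_succ]
    have h1 : fderiv ℝ (mder (B j0.succ) (v j0)) x (EuclideanSpace.single i 1)
        = pder i (mder (B j0.succ) (v j0)) x := rfl
    rw [h1, pder_mder (v j0) (fun j hj => h0 j0.succ j hj)]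

lemma sum_bump_reindex {G : Type*} [AddCommMonoid G] {α β : Fin d → ℕ} {i : Fin d}
    (hα : α = Function.update β i (β i + 1)) (k : Fin (r + 1))
    (f : (Fin (r + 1) → Fin d → ℕ) → G) :
    (∑ B ∈ (decompSet β : Finset (Fin (r + 1) → Fin d → ℕ)), f (bump i B k))
      = ∑ B' ∈ (decompSet α : Finset (Fin (r + 1) → Fin d → ℕ)),
          if B' k i ≠ 0 then f B' else 0 := by
  rw [← Finset.sum_filter]
  refine Finset.sum_nbij' (i := fun B => bump i B k) (j := fun B' => unbump i B' k)
    ?_ ?_ ?_ ?_ ?_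
  · intro B hB
    refine Finset.mem_filter.2 ⟨mem_decompSet.2 ?_, ?_⟩
    · rw [sum_bump, mem_decompSet.1 hB, ← hα]
    · show ¬ bump i B k k i = 0
      unfold bump
      rw [Function.update_self, Function.update_self]
      omega
  · intro B' hB'
    obtain ⟨hB'd, hB'k⟩ := Finset.mem_filter.1 hB'
    refine mem_decompSet.2 ?_
    rw [sum_unbump i B' k hB'k, mem_decompSet.1 hB'd, hα]
    funext j
    by_cases hj : j = i
    · subst hj
      rw [Function.update_self, Function.update_self]
      omega
    · rw [Function.update_of_ne hj, Function.update_of_ne hj]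
  · intro B _; exact unbump_bump i B k
  · intro B' hB'; exact bump_unbump i B' k (Finset.mem_filter.1 hB').2
  · intro B _; rfl

end Multi

section Leibniz

variable {d r : ℕ} {X : Fin r → Type*} [∀ j, NormedAddCommGroup (X j)]
  [∀ j, NormedSpace ℝ (X j)] {Y : Type*} [NormedAddCommGroup Y] [NormedSpace ℝ Y]
  {M : Euc d → ContinuousMultilinearMap ℝ X Y} {v : ∀ j, Euc d → X j}

lemma Tmap_zero : Tmap M v (fun _ _ => 0) = fun x => M x fun j => v j x := by
  funext x
  show mder (fun _ => 0) M x (fun j => mder (fun _ => 0) (v j) x) = M x fun j => v j x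
  rw [mder_zero]
  exact congrArg _ (funext fun j => congrFun (mder_zero (v j)) x)

lemma decompSet_zero :
    (decompSet (fun _ => 0) : Finset (Fin (r + 1) → Fin d → ℕ)) = {fun _ _ => 0} := by
  ext B
  rw [mem_decompSet, Finset.mem_singleton]
  constructor
  · intro h
    funext k j
    exact comp_eq_zero h rfl k
  · intro h
    subst h
    funext j
    rw [Finset.sum_apply]
    simp

lemma coefB_zero : coefB (fun _ _ => 0 : Fin (r + 1) → Fin d → ℕ) = 1 := by
  unfold coefB
  refine Finset.prod_eq_one fun i _ => ?_
  have h := Nat.multinomial_spec (Finset.univ : Finset (Fin (r + 1))) (fun _ => (0 : ℕ))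
  simpa using h

lemma leibniz {η : ℕ} (hM : ContDiff ℝ (η : ℕ∞) M) (hv : ∀ j, ContDiff ℝ (η : ℕ∞) (v j)) :
    ∀ (n : ℕ) (α : Fin d → ℕ), mdeg α ≤ n → mdeg α ≤ η →
      mder α (fun x => M x fun j => v j x)
        = ∑ B ∈ decompSet α, (coefB B : ℝ) • Tmap M v B := by
  have base : ∀ α : Fin d → ℕ, mdeg α = 0 →
      mder α (fun x => M x fun j => v j x)
        = ∑ B ∈ decompSet α, (coefB B : ℝ) • Tmap M v B := by
    intro α h0
    have hα : α = fun _ => 0 := funext fun j => Finset.sum_eq_zero_iff.1 h0 j (Finset.mem_univ j)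
    rw [hα, mder_zero, decompSet_zero, Finset.sum_singleton, coefB_zero, Tmap_zero]
    simp
  intro n
  induction n with
  | zero => intro α h0 _; exact base α (Nat.le_zero.1 h0)
  | succ n ih =>
    intro α h0 hη
    by_cases hz : mdeg α = 0
    · exact base α hz
    · obtain ⟨i, β, hβ0, hαeq, hdeg⟩ := exists_peel hz
      have hstep : mder α (fun x => M x fun j => v j x)
          = pder i (mder β (fun x => M x fun j => v j x)) := by
        rw [hαeq, ← pder_mder _ hβ0]
      rw [hstep, ih β (by omega) (by omega)]
      have hsum_fun : (∑ B ∈ decompSet β, (coefB B : ℝ) • Tmap M v B)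
          = fun y => ∑ B ∈ (decompSet β : Finset (Fin (r + 1) → Fin d → ℕ)),
              (coefB B : ℝ) • Tmap M v B y := by
        funext y
        rw [Finset.sum_apply]
        rfl
      funext x
      have hdiff : ∀ B ∈ (decompSet β : Finset (Fin (r + 1) → Fin d → ℕ)),
          HasFDerivAt (Tmap M v B) (fderiv ℝ (Tmap M v B) x) x := by
        intro B hB
        have hk : ∀ k, mdeg (B k) + 1 ≤ η := by
          intro k
          have := mdeg_comp_le (mem_decompSet.1 hB) k
          omega
        obtain ⟨D, hD, -⟩ := hasFDerivAt_multi
          ((differentiable_mder hM (B 0) (hk 0)) x).hasFDerivAt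
          (fun j => ((differentiable_mder (hv j) (B j.succ) (hk _)) x).hasFDerivAt)
        exact hD.differentiableAt.hasFDerivAt
      have hder : HasFDerivAt
          (fun y => ∑ B ∈ (decompSet β : Finset (Fin (r + 1) → Fin d → ℕ)),
            (coefB B : ℝ) • Tmap M v B y)
          (∑ B ∈ (decompSet β : Finset (Fin (r + 1) → Fin d → ℕ)),
            (coefB B : ℝ) • fderiv ℝ (Tmap M v B) x) x := by
        refine HasFDerivAt.fun_sum fun B hB => ?_
        exact (hdiff B hB).const_smul _
      have hpder : pder i (∑ B ∈ decompSet β, (coefB B : ℝ) • Tmap M v B) x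
          = ∑ B ∈ (decompSet β : Finset (Fin (r + 1) → Fin d → ℕ)),
              (coefB B : ℝ) • fderiv ℝ (Tmap M v B) x (EuclideanSpace.single i 1) := by
        show fderiv ℝ _ x (EuclideanSpace.single i 1) = _
        rw [hsum_fun, hder.fderiv]
        simp
      rw [hpder]
      have hTder : ∀ B ∈ (decompSet β : Finset (Fin (r + 1) → Fin d → ℕ)),
          fderiv ℝ (Tmap M v B) x (EuclideanSpace.single i 1)
            = ∑ k, Tmap M v (bump i B k) x := by
        intro B hB
        have hk : ∀ k, mdeg (B k) + 1 ≤ η := by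
          intro k; have := mdeg_comp_le (mem_decompSet.1 hB) k; omega
        have h0' : ∀ k j, j < i → B k j = 0 :=
          fun k j hj => comp_eq_zero (mem_decompSet.1 hB) (hβ0 j hj) k
        exact congrFun (pder_Tmap hM hv i B hk h0') x
      rw [Finset.sum_congr rfl fun B hB => by rw [hTder B hB]]
      rw [Finset.sum_congr rfl fun B (hB : B ∈ (decompSet β : Finset _)) =>
        (Finset.smul_sum (r := (coefB B : ℝ)))]
      rw [Finset.sum_comm]
      have hre : ∀ k : Fin (r + 1),
          (∑ B ∈ (decompSet β : Finset (Fin (r + 1) → Fin d → ℕ)),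
              (coefB B : ℝ) • Tmap M v (bump i B k) x)
            = ∑ B' ∈ (decompSet α : Finset (Fin (r + 1) → Fin d → ℕ)),
                (if B' k i ≠ 0 then (coefB (unbump i B' k) : ℝ) else 0) • Tmap M v B' x := by
        intro k
        have h1 : ∀ B ∈ (decompSet β : Finset (Fin (r + 1) → Fin d → ℕ)),
            (coefB B : ℝ) • Tmap M v (bump i B k) x
              = (fun B' => (coefB (unbump i B' k) : ℝ) • Tmap M v B' x) (bump i B k) := by
          intro B _
          simp only
          rw [unbump_bump]
        rw [Finset.sum_congr rfl h1]
        rw [sum_bump_reindex hαeq k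
          (f := fun B' => (coefB (unbump i B' k) : ℝ) • Tmap M v B' x)]
        refine Finset.sum_congr rfl fun B' _ => ?_
        by_cases hc : B' k i ≠ 0
        · rw [if_pos hc, if_pos hc]
        · rw [if_neg hc, if_neg hc, zero_smul]
      rw [Finset.sum_congr rfl fun k _ => hre k, Finset.sum_comm]
      rw [show (∑ B ∈ decompSet α, (coefB B : ℝ) • Tmap M v B) x
          = ∑ B ∈ (decompSet α : Finset (Fin (r + 1) → Fin d → ℕ)),
              (coefB B : ℝ) • Tmap M v B x from by rw [Finset.sum_apply]; rfl]
      refine Finset.sum_congr rfl fun B' hB' => ?_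
      rw [← Finset.sum_smul]
      congr 1
      have hαi : α i ≠ 0 := by rw [hαeq, Function.update_self]; omega
      rw [← coefB_pascal B' (mem_decompSet.1 hB') hαi, Nat.cast_sum]
      refine Finset.sum_congr rfl fun k _ => ?_
      rw [apply_ite (fun m : ℕ => (m : ℝ)), Nat.cast_zero]

end Leibniz

section Holder

variable {d : ℕ} {μ : Measure (Euc d)}

lemma eLpNorm_finset_prod_le {ι : Type*} (s : Finset ι) (F : ι → Euc d → ℝ)
    (e : ι → ℝ≥0∞) (hF : ∀ i ∈ s, AEStronglyMeasurable (F i) μ) :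
    eLpNorm (fun x => ∏ i ∈ s, F i x) (∑ i ∈ s, (e i)⁻¹)⁻¹ μ
      ≤ ∏ i ∈ s, eLpNorm (F i) (e i) μ := by
  classical
  induction s using Finset.cons_induction with
  | empty =>
    simp only [Finset.prod_empty, Finset.sum_empty, ENNReal.inv_zero]
    rw [eLpNorm_exponent_top]
    refine le_trans (eLpNormEssSup_le_of_ae_bound (C := 1) ?_) ?_
    · filter_upwards with x; simp
    · simp
  | cons a s ha ih =>
    have hFa : AEStronglyMeasurable (F a) μ := hF a (Finset.mem_cons_self a s)
    have hFs : ∀ i ∈ s, AEStronglyMeasurable (F i) μ :=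
      fun i hi => hF i (Finset.mem_cons_of_mem hi)
    simp only [Finset.prod_cons, Finset.sum_cons]
    have key := eLpNorm_smul_le_mul_eLpNorm (μ := μ)
      (f := fun x => ∏ i ∈ s, F i x) (φ := F a)
      (r := ((e a)⁻¹ + ∑ i ∈ s, (e i)⁻¹)⁻¹) (p := e a) (q := (∑ i ∈ s, (e i)⁻¹)⁻¹)
      (Finset.aestronglyMeasurable_fun_prod s hFs) hFa
      (hpqr := ⟨by simp only [inv_inv]⟩)
    have hmul : (F a • fun x => ∏ i ∈ s, F i x) = fun x => F a x * ∏ i ∈ s, F i x := rfl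
    rw [hmul] at key
    exact le_trans key (mul_le_mul_right (ih hFs) _)

variable {r : ℕ} {X : Fin r → Type*} [∀ j, NormedAddCommGroup (X j)]
  [∀ j, NormedSpace ℝ (X j)] {Y : Type*} [NormedAddCommGroup Y] [NormedSpace ℝ Y]
  {M : Euc d → ContinuousMultilinearMap ℝ X Y} {v : ∀ j, Euc d → X j}

lemma eLpNorm_Tmap_le {η : ℕ} (hM : ContDiff ℝ (η : ℕ∞) M)
    (hv : ∀ j, ContDiff ℝ (η : ℕ∞) (v j)) (p : ℝ≥0∞) (ps : Fin r → ℝ≥0∞)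
    (B : Fin (r + 1) → Fin d → ℕ) (hB : ∀ k, mdeg (B k) ≤ η) :
    eLpNorm (Tmap M v B) (p⁻¹ + ∑ j, (ps j)⁻¹)⁻¹ μ
      ≤ eLpNorm (mder (B 0) M) p μ * ∏ j, eLpNorm (mder (B j.succ) (v j)) (ps j) μ := by
  classical
  set F : Fin (r + 1) → Euc d → ℝ :=
    fun k => Fin.cases (fun x => ‖mder (B 0) M x‖) (fun j x => ‖mder (B j.succ) (v j) x‖) k
    with hF
  set e : Fin (r + 1) → ℝ≥0∞ := Fin.cons p ps with he
  have hFm : ∀ k ∈ (Finset.univ : Finset (Fin (r + 1))), AEStronglyMeasurable (F k) μ := by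
    intro k _
    refine Fin.cases ?_ (fun j => ?_) k
    · exact ((continuous_mder hM _ (hB 0)).norm).aestronglyMeasurable
    · exact ((continuous_mder (hv j) _ (hB _)).norm).aestronglyMeasurable
  have hpoint : ∀ x, ‖Tmap M v B x‖ ≤ ∏ k, F k x := by
    intro x
    rw [Fin.prod_univ_succ]
    simp only [hF, Fin.cases_zero, Fin.cases_succ]
    exact (mder (B 0) M x).le_opNorm _
  have hsum : (∑ k, (e k)⁻¹) = p⁻¹ + ∑ j, (ps j)⁻¹ := by
    rw [Fin.sum_univ_succ]
    simp [he]
  calc eLpNorm (Tmap M v B) (p⁻¹ + ∑ j, (ps j)⁻¹)⁻¹ μ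
      ≤ eLpNorm (fun x => ∏ k, F k x) (p⁻¹ + ∑ j, (ps j)⁻¹)⁻¹ μ :=
        eLpNorm_mono_real hpoint
    _ = eLpNorm (fun x => ∏ k, F k x) (∑ k, (e k)⁻¹)⁻¹ μ := by rw [hsum]
    _ ≤ ∏ k, eLpNorm (F k) (e k) μ := eLpNorm_finset_prod_le Finset.univ F e hFm
    _ = eLpNorm (mder (B 0) M) p μ * ∏ j, eLpNorm (mder (B j.succ) (v j)) (ps j) μ := by
        rw [Fin.prod_univ_succ]
        simp only [hF, he, Fin.cases_zero, Fin.cases_succ, Fin.cons_zero, Fin.cons_succ]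
        rw [eLpNorm_norm]
        exact congrArg _ (Finset.prod_congr rfl fun j _ => eLpNorm_norm _)

end Holder


lemma mfact_ne_zero {d : ℕ} (γ : Fin d → ℕ) : mfact γ ≠ 0 :=
  Finset.prod_ne_zero_iff.2 fun i _ => (Nat.factorial_pos _).ne'

lemma mem_mIdx_iff {d η : ℕ} {α : Fin d → ℕ} : α ∈ mIdx d η ↔ mdeg α ≤ η := by
  constructor
  · exact fun h => (Finset.mem_filter.1 h).2
  · intro h
    refine Finset.mem_filter.2 ⟨Fintype.mem_piFinset.2 fun i => ?_, h⟩
    rw [Finset.mem_range, Nat.lt_succ_iff]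
    exact le_trans (Finset.single_le_sum (f := fun j => α j) (fun j _ => Nat.zero_le _)
      (Finset.mem_univ i)) h


set_option maxHeartbeats 1000000 in
/-- Multilinear submultiplicativity of the Sobolev–Bochner norms:
for `M ∈ W^{η,p}(D;B(X_1,…,X_r;Y))` (bounded `r`-linear maps, modelled as continuous
multilinear maps with the operator norm) and `v_j ∈ W^{η,p_j}(D;X_j)` with
`q = (p⁻¹ + ∑_j p_j⁻¹)⁻¹ ≥ 1`, the pointwise application `M v_1 ⋯ v_r` lies in
`W^{η,q}(D;Y)` and its norm is bounded by the product of the norms. -/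
theorem product_rule_sobolev_multilinear
    (d : ℕ) (hd : 1 ≤ d) (η r : ℕ) (p : ℝ≥0∞) (ps : Fin r → ℝ≥0∞)
    (hp : 1 ≤ p) (hps : ∀ j, 1 ≤ ps j)
    (hq : 1 ≤ (p⁻¹ + ∑ j, (ps j)⁻¹)⁻¹)
    (D : Set (Euc d)) (hDopen : IsOpen D) (hDbdd : Bornology.IsBounded D)
    {X : Fin r → Type*} [∀ j, NormedAddCommGroup (X j)] [∀ j, NormedSpace ℝ (X j)]
    [∀ j, CompleteSpace (X j)]
    {Y : Type*} [NormedAddCommGroup Y] [NormedSpace ℝ Y] [CompleteSpace Y]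
    (M : Euc d → ContinuousMultilinearMap ℝ X Y) (v : ∀ j, Euc d → X j)
    (hM : ContDiff ℝ (η : ℕ∞) M) (hv : ∀ j, ContDiff ℝ (η : ℕ∞) (v j))
    (hMW : MemW η p (volume.restrict D) M)
    (hvW : ∀ j, MemW η (ps j) (volume.restrict D) (v j)) :
    MemW η ((p⁻¹ + ∑ j, (ps j)⁻¹)⁻¹) (volume.restrict D) (fun x => M x (fun j => v j x)) ∧
      sobNorm η ((p⁻¹ + ∑ j, (ps j)⁻¹)⁻¹) (volume.restrict D) (fun x => M x (fun j => v j x)) ≤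
        sobNorm η p (volume.restrict D) M * ∏ j, sobNorm η (ps j) (volume.restrict D) (v j) := by
  classical
  set μ := volume.restrict D with hμ
  set q := (p⁻¹ + ∑ j, (ps j)⁻¹)⁻¹ with hqdef
  set Fv : Euc d → Y := fun x => M x fun j => v j x with hFv
  have hBk_mem : ∀ {α : Fin d → ℕ}, α ∈ mIdx d η →
      ∀ B ∈ (decompSet α : Finset (Fin (r + 1) → Fin d → ℕ)), ∀ k, B k ∈ mIdx d η := by
    intro α hα B hB k
    exact mem_mIdx_iff.2 (le_trans (mdeg_comp_le (mem_decompSet.1 hB) k) (mem_mIdx_iff.1 hα))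
  have hBdeg : ∀ {α : Fin d → ℕ}, α ∈ mIdx d η →
      ∀ B ∈ (decompSet α : Finset (Fin (r + 1) → Fin d → ℕ)), ∀ k, mdeg (B k) ≤ η :=
    fun hα B hB k => mem_mIdx_iff.1 (hBk_mem hα B hB k)
  have hTmem : ∀ {α : Fin d → ℕ}, α ∈ mIdx d η →
      ∀ B ∈ (decompSet α : Finset (Fin (r + 1) → Fin d → ℕ)), MemLp (Tmap M v B) q μ := by
    intro α hα B hB
    refine ⟨(continuous_Tmap hM hv B (hBdeg hα B hB)).aestronglyMeasurable, ?_⟩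
    refine lt_of_le_of_lt (eLpNorm_Tmap_le hM hv p ps B (hBdeg hα B hB)) ?_
    refine ENNReal.mul_lt_top ?_ ?_
    · exact (hMW _ (hBk_mem hα B hB 0)).2
    · exact ENNReal.prod_lt_top fun j _ => (hvW j _ (hBk_mem hα B hB j.succ)).2
  have hleib : ∀ α ∈ mIdx d η, mder α Fv = ∑ B ∈ decompSet α, (coefB B : ℝ) • Tmap M v B :=
    fun α hα => leibniz hM hv (mdeg α) α le_rfl (mem_mIdx_iff.1 hα)
  have hq1 : (1 : ℝ≥0∞) ≤ q := hq
  have hMemQ : ∀ α ∈ mIdx d η, MemLp (mder α Fv) q μ := by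
    intro α hα
    rw [hleib α hα]
    refine memLp_finset_sum' _ fun B hB => ?_
    exact (hTmem hα B hB).const_smul _
  refine ⟨fun α hα => hMemQ α hα, ?_⟩
  -- the norm inequality
  set NM : (Fin d → ℕ) → ℝ≥0∞ := fun γ => eLpNorm (mder γ M) p μ with hNM
  set NV : ∀ _ : Fin r, (Fin d → ℕ) → ℝ≥0∞ := fun j γ => eLpNorm (mder γ (v j)) (ps j) μ
    with hNV
  have hNMne : ∀ γ ∈ mIdx d η, NM γ ≠ ⊤ := fun γ hγ => (hMW γ hγ).2.ne
  have hNVne : ∀ (j) (γ), γ ∈ mIdx d η → NV j γ ≠ ⊤ := fun j γ hγ => (hvW j γ hγ).2.ne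
  have hKB : ∀ α ∈ mIdx d η, eLpNorm (mder α Fv) q μ
      ≤ ∑ B ∈ decompSet α, (coefB B : ℝ≥0∞) * (NM (B 0) * ∏ j, NV j (B j.succ)) := by
    intro α hα
    rw [hleib α hα]
    refine le_trans (eLpNorm_sum_le (fun B hB => ((hTmem hα B hB).1.const_smul _)) hq1) ?_
    refine Finset.sum_le_sum fun B hB => ?_
    rw [eLpNorm_const_smul]
    have hcast : ‖(coefB B : ℝ)‖ₑ = (coefB B : ℝ≥0∞) := by
      simp
    rw [hcast]
    exact mul_le_mul_right (eLpNorm_Tmap_le hM hv p ps B (hBdeg hα B hB)) _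
  set N : Fin (r + 1) → (Fin d → ℕ) → ℝ≥0∞ := fun k => Fin.cases NM NV k with hN
  have hNne : ∀ (k) (γ), γ ∈ mIdx d η → N k γ ≠ ⊤ := by
    intro k
    refine Fin.cases ?_ (fun j => ?_) k
    · exact hNMne
    · exact hNVne j
  have hdisj : (↑(mIdx d η) : Set (Fin d → ℕ)).PairwiseDisjoint
      (decompSet : (Fin d → ℕ) → Finset (Fin (r + 1) → Fin d → ℕ)) := by
    intro α1 _ α2 _ hne
    refine Finset.disjoint_left.2 fun B hB1 hB2 => hne ?_
    rw [← mem_decompSet.1 hB1, mem_decompSet.1 hB2]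
  have hE : (∑ α ∈ mIdx d η, ((mfact α : ℝ≥0∞))⁻¹ * eLpNorm (mder α Fv) q μ)
      ≤ (∑ γ ∈ mIdx d η, ((mfact γ : ℝ≥0∞))⁻¹ * NM γ)
        * ∏ j, ∑ γ ∈ mIdx d η, ((mfact γ : ℝ≥0∞))⁻¹ * NV j γ := by
    have hstep1 : (∑ α ∈ mIdx d η, ((mfact α : ℝ≥0∞))⁻¹ * eLpNorm (mder α Fv) q μ)
        ≤ ∑ α ∈ mIdx d η, ∑ B ∈ decompSet α,
            ∏ k, ((mfact (B k) : ℝ≥0∞))⁻¹ * N k (B k) := by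
      refine le_trans (Finset.sum_le_sum fun α hα => mul_le_mul_right (hKB α hα) _) ?_
      refine le_of_eq (Finset.sum_congr rfl fun α hα => ?_)
      rw [Finset.mul_sum]
      refine Finset.sum_congr rfl fun B hB => ?_
      have hsumB := mem_decompSet.1 hB
      have hcne : (coefB B : ℝ≥0∞) ≠ 0 := Nat.cast_ne_zero.2 (coefB_ne_zero B)
      have h1 : (mfact α : ℝ≥0∞) = (coefB B : ℝ≥0∞) * ∏ k, (mfact (B k) : ℝ≥0∞) := by
        rw [← Nat.cast_prod, ← Nat.cast_mul, coefB_mul_prod_mfact hsumB]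
      have hP : (∏ k, (mfact (B k) : ℝ≥0∞))⁻¹ = ∏ k, ((mfact (B k) : ℝ≥0∞))⁻¹ :=
        ENNReal.prod_inv_distrib fun k _ k' _ _ =>
          Or.inl (Nat.cast_ne_zero.2 (mfact_ne_zero _))
      have h2 : ((mfact α : ℝ≥0∞))⁻¹ * (coefB B : ℝ≥0∞)
          = ∏ k, ((mfact (B k) : ℝ≥0∞))⁻¹ := by
        rw [h1, ENNReal.mul_inv (Or.inl hcne) (Or.inl (ENNReal.natCast_ne_top _)),
          mul_comm ((coefB B : ℝ≥0∞))⁻¹ (∏ k, (mfact (B k) : ℝ≥0∞))⁻¹, mul_assoc,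
          ENNReal.inv_mul_cancel hcne (ENNReal.natCast_ne_top _), mul_one, hP]
      rw [← mul_assoc, h2, Finset.prod_mul_distrib]
      congr 1
      rw [Fin.prod_univ_succ]
      simp only [hN, Fin.cases_zero, Fin.cases_succ]
    have hstep2 : (∑ α ∈ mIdx d η, ∑ B ∈ decompSet α,
          ∏ k, ((mfact (B k) : ℝ≥0∞))⁻¹ * N k (B k))
        ≤ ∑ B ∈ Fintype.piFinset (fun _ : Fin (r + 1) => mIdx d η),
            ∏ k, ((mfact (B k) : ℝ≥0∞))⁻¹ * N k (B k) := by
      rw [← Finset.sum_biUnion hdisj]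
      refine Finset.sum_le_sum_of_subset ?_
      intro B hB
      obtain ⟨α, hα, hBα⟩ := Finset.mem_biUnion.1 hB
      exact Fintype.mem_piFinset.2 fun k => hBk_mem hα B hBα k
    have hstep3 : (∑ B ∈ Fintype.piFinset (fun _ : Fin (r + 1) => mIdx d η),
          ∏ k, ((mfact (B k) : ℝ≥0∞))⁻¹ * N k (B k))
        = ∏ k : Fin (r + 1), ∑ γ ∈ mIdx d η, ((mfact γ : ℝ≥0∞))⁻¹ * N k γ :=
      (Finset.prod_univ_sum (fun _ : Fin (r + 1) => mIdx d η)
        (fun k γ => ((mfact γ : ℝ≥0∞))⁻¹ * N k γ)).symm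
    refine le_trans hstep1 (le_trans hstep2 (le_of_eq ?_))
    rw [hstep3, Fin.prod_univ_succ]
    simp only [hN, Fin.cases_zero, Fin.cases_succ]
  -- convert to real numbers
  have hmfinv : ∀ γ : Fin d → ℕ, ((mfact γ : ℝ≥0∞))⁻¹ ≠ ⊤ :=
    fun γ => ENNReal.inv_ne_top.2 (Nat.cast_ne_zero.2 (mfact_ne_zero γ))
  have htoReal : ∀ (f : (Fin d → ℕ) → ℝ≥0∞), (∀ γ ∈ mIdx d η, f γ ≠ ⊤) →
      (∑ γ ∈ mIdx d η, ((mfact γ : ℝ≥0∞))⁻¹ * f γ).toReal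
        = ∑ γ ∈ mIdx d η, ((mfact γ : ℝ))⁻¹ * (f γ).toReal := by
    intro f hf
    rw [ENNReal.toReal_sum (fun γ hγ => ENNReal.mul_ne_top (hmfinv γ) (hf γ hγ))]
    refine Finset.sum_congr rfl fun γ hγ => ?_
    rw [ENNReal.toReal_mul, ENNReal.toReal_inv, ENNReal.toReal_natCast]
  have hQne : ∀ α ∈ mIdx d η, eLpNorm (mder α Fv) q μ ≠ ⊤ := fun α hα => (hMemQ α hα).2.ne
  have hsobQ : sobNorm η q μ Fv
      = (∑ α ∈ mIdx d η, ((mfact α : ℝ≥0∞))⁻¹ * eLpNorm (mder α Fv) q μ).toReal :=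
    (htoReal _ hQne).symm
  have hsobM : sobNorm η p μ M
      = (∑ γ ∈ mIdx d η, ((mfact γ : ℝ≥0∞))⁻¹ * NM γ).toReal := (htoReal _ hNMne).symm
  have hsobV : ∀ j, sobNorm η (ps j) μ (v j)
      = (∑ γ ∈ mIdx d η, ((mfact γ : ℝ≥0∞))⁻¹ * NV j γ).toReal :=
    fun j => (htoReal _ (fun γ hγ => hNVne j γ hγ)).symm
  have hEMne : (∑ γ ∈ mIdx d η, ((mfact γ : ℝ≥0∞))⁻¹ * NM γ) ≠ ⊤ :=
    (ENNReal.sum_lt_top.2 fun γ hγ =>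
      ENNReal.mul_lt_top (lt_top_iff_ne_top.2 (hmfinv γ))
        (lt_top_iff_ne_top.2 (hNMne γ hγ))).ne
  have hEVne : ∀ j, (∑ γ ∈ mIdx d η, ((mfact γ : ℝ≥0∞))⁻¹ * NV j γ) ≠ ⊤ :=
    fun j => (ENNReal.sum_lt_top.2 fun γ hγ =>
      ENNReal.mul_lt_top (lt_top_iff_ne_top.2 (hmfinv γ))
        (lt_top_iff_ne_top.2 (hNVne j γ hγ))).ne
  rw [hsobQ, hsobM]
  rw [show (∏ j, sobNorm η (ps j) μ (v j))
      = ∏ j, (∑ γ ∈ mIdx d η, ((mfact γ : ℝ≥0∞))⁻¹ * NV j γ).toReal from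
    Finset.prod_congr rfl fun j _ => hsobV j]
  rw [← ENNReal.toReal_prod, ← ENNReal.toReal_mul]
  refine ENNReal.toReal_mono ?_ hE
  exact ENNReal.mul_ne_top hEMne
    (ENNReal.prod_lt_top fun j _ => lt_top_iff_ne_top.2 (hEVne j)).ne


end
end

section
/- Let V[y](x) = ψ_0(x) + ∑_{k=1}^M σ_k ψ_k(x) y_k be the parametrised Karhunen–Loève expansion of the random vector field V, and set B[y](x) := V[y](x) V[y](x)^T ∈ ℝ^{d×d} and C[y](x) := V[y](x)^T V[y](x) ∈ ℝ. Then for every multi-index α ∈ ℕ^M one has ⦀∂_y^α B⦀_{κ,∞,D} ≤ c_{γ_κ}^2 · γ_κ^α and ⦀∂_y^α C⦀_{κ,∞,D} ≤ c_{γ_κ}^2 · γ_κ^α, where γ_κ^α := ∏_{k=1}^M γ_{κ,k}^{α_k}. -/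
open MeasureTheory Finset
open scoped ENNReal RealInnerProductSpace

noncomputable section

namespace BCAux

variable {n m : ℕ} {X E F G : Type*} [NormedAddCommGroup X] [NormedSpace ℝ X]
  [NormedAddCommGroup E] [NormedSpace ℝ E] [NormedAddCommGroup F] [NormedSpace ℝ F]
  [NormedAddCommGroup G] [NormedSpace ℝ G]

/-! ### dseq basics -/

noncomputable def dseq (l : List (Fin n)) (f : Euc n → X) : Euc n → X := l.foldr pder f

@[simp] lemma dseq_nil (f : Euc n → X) : dseq [] f = f := rfl

@[simp] lemma dseq_cons (i : Fin n) (l : List (Fin n)) (f : Euc n → X) :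
    dseq (i :: l) f = pder i (dseq l f) := rfl

lemma dseq_append (l₁ l₂ : List (Fin n)) (f : Euc n → X) :
    dseq (l₁ ++ l₂) f = dseq l₁ (dseq l₂ f) := List.foldr_append

lemma pder_const (i : Fin n) (c : X) : pder i (fun _ => c) = fun _ => 0 := by
  funext x; simp [pder]

lemma dseq_zero (l : List (Fin n)) : dseq l (fun _ => (0 : X)) = fun _ => 0 := by
  induction l with
  | nil => rfl
  | cons i t ih => rw [dseq_cons, ih, pder_const]

def canonList (α : Fin m → ℕ) : List (Fin m) :=
  (List.finRange m).flatMap fun i => List.replicate (α i) i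

lemma dseq_replicate (k : ℕ) (i : Fin n) (f : Euc n → X) :
    dseq (List.replicate k i) f = (pder i)^[k] f := by
  induction k with
  | zero => rfl
  | succ k ih =>
    rw [List.replicate_succ, dseq_cons, ih]
    exact (Function.iterate_succ_apply' _ _ _).symm

lemma foldr_comp_apply {A : Type*} (gs : List (A → A)) (f : A) :
    gs.foldr (· ∘ ·) id f = gs.foldr (fun g r => g r) f := by
  induction gs with
  | nil => rfl
  | cons g t ih => simp only [List.foldr_cons, Function.comp_apply, ih]

lemma mder_eq_dseq (α : Fin n → ℕ) (f : Euc n → X) : mder α f = dseq (canonList α) f := by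
  rw [mder, foldr_comp_apply, List.ofFn_eq_map, List.foldr_map, canonList]
  generalize List.finRange n = L
  induction L with
  | nil => rfl
  | cons i t ih =>
    rw [List.flatMap_cons, List.foldr_cons, dseq_append, dseq_replicate, ih]

lemma count_canonList (α : Fin m → ℕ) (k : Fin m) : (canonList α).count k = α k := by
  have h : ∀ L : List (Fin m),
      ((L.flatMap fun i => List.replicate (α i) i).count k)
        = (L.map fun i => if k = i then α i else 0).sum := by
    intro L
    induction L with
    | nil => rfl
    | cons i t ih =>
      rw [List.flatMap_cons, List.count_append, ih, List.map_cons, List.sum_cons,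
        List.count_replicate]
      by_cases h : k = i
      · subst h; simp
      · simp [h, Ne.symm h]
  rw [canonList, h]
  have : (∑ i, if k = i then α i else 0) = α k := by simp
  rw [← this, Fin.sum_univ_def]

lemma length_canonList (α : Fin m → ℕ) : (canonList α).length = mdeg α := by
  have h : ∀ L : List (Fin m),
      ((L.flatMap fun i => List.replicate (α i) i).length)
        = (L.map fun i => α i).sum := by
    intro L
    induction L with
    | nil => rfl
    | cons i t ih =>
      rw [List.flatMap_cons, List.length_append, ih, List.map_cons, List.sum_cons,
        List.length_replicate]
  rw [canonList, h, mdeg, Fin.sum_univ_def]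

lemma sum_count (l : List (Fin n)) : (∑ k, l.count k) = l.length := by
  induction l with
  | nil => simp
  | cons i t ih =>
    simp only [List.count_cons, List.length_cons, ← ih, Finset.sum_add_distrib]
    simp

lemma canonList_zero : canonList (fun _ => (0 : ℕ) : Fin m → ℕ) = [] := by
  simp [canonList]

lemma mder_zero_idx (f : Euc n → X) : mder (fun _ => 0) f = f := by
  rw [mder_eq_dseq, canonList_zero, dseq_nil]

lemma mder_zero_fun (α : Fin n → ℕ) : mder α (fun _ => (0 : X)) = fun _ => 0 := by
  rw [mder_eq_dseq, dseq_zero]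

lemma prod_pow_count (γ : Fin n → ℝ) (l : List (Fin n)) :
    (∏ k, γ k ^ l.count k) = (l.map γ).prod := by
  induction l with
  | nil => simp
  | cons i t ih =>
    have h1 : ∀ k, List.count k (i :: t) = (if i = k then 1 else 0) + List.count k t := by
      intro k
      rw [List.count_cons]
      by_cases h : k = i
      · subst h; simp [Nat.add_comm]
      · simp [h, Ne.symm h]
    simp only [h1, pow_add, Finset.prod_mul_distrib, ih, List.map_cons, List.prod_cons]
    have h2 : ∀ x, γ x ^ (if i = x then 1 else 0) = (if i = x then γ x else 1) := fun x => by
      split <;> simp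
    simp [h2, Finset.prod_ite_eq, mul_comm]

end BCAux
namespace BCAux

variable {n m : ℕ} {X E F G : Type*} [NormedAddCommGroup X] [NormedSpace ℝ X]
  [NormedAddCommGroup E] [NormedSpace ℝ E] [NormedAddCommGroup F] [NormedSpace ℝ F]
  [NormedAddCommGroup G] [NormedSpace ℝ G]

/-! ### calculus basics -/

lemma pder_contDiff {f : Euc n → X} {N M : WithTop ℕ∞} (hf : ContDiff ℝ N f)
    (h : M + 1 ≤ N) (i : Fin n) : ContDiff ℝ M (pder i f) := by
  unfold pder
  exact (hf.fderiv_right h).clm_apply contDiff_const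

lemma dseq_contDiff {κ : ℕ} {f : Euc n → X} (hf : ContDiff ℝ (κ : ℕ∞) f) :
    ∀ (l : List (Fin n)) (M : ℕ), l.length + M ≤ κ → ContDiff ℝ (M : ℕ∞) (dseq l f) := by
  intro l
  induction l with
  | nil =>
    intro M h
    exact hf.of_le (by exact_mod_cast (by simpa using h : M ≤ κ))
  | cons i t ih =>
    intro M h
    rw [dseq_cons]
    refine pder_contDiff (ih (M + 1) (by simp at h ⊢; omega)) ?_ i
    push_cast
    exact le_rfl

lemma pder_add {f g : Euc n → X} (hf : Differentiable ℝ f) (hg : Differentiable ℝ g) (i : Fin n) :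
    pder i (fun x => f x + g x) = fun x => pder i f x + pder i g x := by
  funext x
  simp only [pder]
  rw [fderiv_fun_add (hf x) (hg x)]
  rfl

lemma pder_smul (c : ℝ) {f : Euc n → X} (hf : Differentiable ℝ f) (i : Fin n) :
    pder i (fun x => c • f x) = fun x => c • pder i f x := by
  funext x
  simp only [pder]
  rw [fderiv_fun_const_smul (hf x) c]
  rfl

lemma pder_finsetSum {ι : Type*} (s : Finset ι) (F : ι → Euc n → X)
    (h : ∀ j ∈ s, Differentiable ℝ (F j)) (i : Fin n) :
    pder i (fun x => ∑ j ∈ s, F j x) = fun x => ∑ j ∈ s, pder i (F j) x := by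
  funext x
  simp only [pder]
  rw [fderiv_fun_sum (fun j hj => (h j hj) x)]
  simp

lemma pder_clm (Φ : E →L[ℝ] X) {W : Euc n → E} (hW : Differentiable ℝ W) (i : Fin n) :
    pder i (fun x => Φ (W x)) = fun x => Φ (pder i W x) := by
  funext x
  simp only [pder]
  have h := (Φ.hasFDerivAt.comp x (hW x).hasFDerivAt).fderiv
  rw [show (fun x => Φ (W x)) = Φ ∘ W from rfl, h]
  rfl

lemma pder_bilin (B : E →L[ℝ] F →L[ℝ] G) {f : Euc n → E} {g : Euc n → F}
    (hf : Differentiable ℝ f) (hg : Differentiable ℝ g) (i : Fin n) :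
    pder i (fun x => B (f x) (g x)) =
      fun x => B (pder i f x) (g x) + B (f x) (pder i g x) := by
  funext x
  simp only [pder]
  have hc : DifferentiableAt ℝ (fun y => B (f y)) x :=
    (B.differentiable.comp hf) x
  rw [fderiv_clm_apply hc (hg x)]
  have hfd : fderiv ℝ (fun y => B (f y)) x = B.comp (fderiv ℝ f x) := by
    rw [show (fun y => B (f y)) = B ∘ f from rfl]
    exact (B.hasFDerivAt.comp x (hf x).hasFDerivAt).fderiv
  rw [hfd]
  simp only [ContinuousLinearMap.add_apply, ContinuousLinearMap.coe_comp', Function.comp_apply,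
    ContinuousLinearMap.flip_apply, ContinuousLinearMap.comp_apply]
  exact add_comm _ _

lemma pder_comm {f : Euc n → X} {N : WithTop ℕ∞} (hf : ContDiff ℝ N f) (hN : 2 ≤ N)
    (i j : Fin n) : pder i (pder j f) = pder j (pder i f) := by
  funext x
  have hdf : Differentiable ℝ (fderiv ℝ f) :=
    (hf.fderiv_right (m := 1) (le_trans (by norm_num) hN)).differentiable (by simp)
  have key : ∀ v w : Euc n,
      fderiv ℝ (fun y => fderiv ℝ f y v) x w = fderiv ℝ (fderiv ℝ f) x w v := by
    intro v w
    rw [fderiv_clm_apply (hdf x) (differentiableAt_const v)]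
    simp
  have hunfold : ∀ (g : Euc n → X) (a b : Fin n) (x : Euc n),
      pder a (pder b g) x
        = fderiv ℝ (fun y => fderiv ℝ g y (EuclideanSpace.single b 1)) x
            (EuclideanSpace.single a 1) := fun g a b x => rfl
  rw [hunfold, hunfold, key, key]
  exact (hf.contDiffAt.isSymmSndFDerivAt (by simpa [minSmoothness_of_isRCLikeNormedField] using hN)).eq _ _

lemma dseq_perm {κ : ℕ} {f : Euc n → X} (hf : ContDiff ℝ (κ : ℕ∞) f)
    {l₁ l₂ : List (Fin n)} (hp : l₁.Perm l₂) : l₁.length ≤ κ → dseq l₁ f = dseq l₂ f := by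
  induction hp with
  | nil => intro _; rfl
  | cons x h ih =>
    intro hl
    simp only [dseq_cons]
    rw [ih (by simp at hl; omega)]
  | swap a b t =>
    intro hl
    simp only [dseq_cons]
    have h2 : ContDiff ℝ ((2 : ℕ) : ℕ∞) (dseq t f) :=
      dseq_contDiff hf t 2 (by simp at hl; omega)
    exact pder_comm h2 (by exact_mod_cast le_rfl) b a
  | trans h₁ h₂ ih₁ ih₂ =>
    intro hl
    rw [ih₁ hl, ih₂ (h₁.length_eq ▸ hl)]

/-! ### multi-index bookkeeping -/

def inc (α : Fin m → ℕ) (i : Fin m) : Fin m → ℕ := fun k => if k = i then α k + 1 else α k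

def dec (α : Fin m → ℕ) (i : Fin m) : Fin m → ℕ := fun k => if k = i then α k - 1 else α k

@[simp] lemma inc_self (α : Fin m → ℕ) (i : Fin m) : inc α i i = α i + 1 := by simp [inc]

lemma inc_other (α : Fin m → ℕ) {i k : Fin m} (h : k ≠ i) : inc α i k = α k := by simp [inc, h]

@[simp] lemma dec_self (α : Fin m → ℕ) (i : Fin m) : dec α i i = α i - 1 := by simp [dec]

lemma dec_other (α : Fin m → ℕ) {i k : Fin m} (h : k ≠ i) : dec α i k = α k := by simp [dec, h]

lemma mdeg_inc (α : Fin m → ℕ) (i : Fin m) : mdeg (inc α i) = mdeg α + 1 := by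
  have h : ∀ k, inc α i k = α k + (if k = i then 1 else 0) := by
    intro k; by_cases hk : k = i <;> simp [inc, hk]
  simp [mdeg, h, Finset.sum_add_distrib]

lemma pder_mder {κ : ℕ} {f : Euc n → X} (hf : ContDiff ℝ (κ : ℕ∞) f) (i : Fin n) (α : Fin n → ℕ)
    (h : mdeg α + 1 ≤ κ) : pder i (mder α f) = mder (inc α i) f := by
  rw [mder_eq_dseq, mder_eq_dseq, ← dseq_cons]
  refine dseq_perm hf ?_ ?_
  · rw [List.perm_iff_count]
    intro a
    rw [List.count_cons, count_canonList, count_canonList, inc]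
    by_cases hai : a = i
    · simp [hai]
    · simp [hai, Ne.symm hai]
  · simp [length_canonList]
    omega

lemma mem_mIic {ν β : Fin m → ℕ} : β ∈ mIic ν ↔ ∀ k, β k ≤ ν k := by
  simp [mIic, Fintype.mem_piFinset, Nat.lt_succ_iff]

lemma mem_mIdx {η : ℕ} {α : Fin m → ℕ} : α ∈ mIdx m η ↔ mdeg α ≤ η := by
  simp only [mIdx, Finset.mem_filter, Fintype.mem_piFinset, Finset.mem_range, Nat.lt_succ_iff,
    mdeg]
  constructor
  · rintro ⟨_, h2⟩; exact h2
  · intro h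
    exact ⟨fun k => le_trans (Finset.single_le_sum (fun _ _ => Nat.zero_le _)
      (Finset.mem_univ k)) h, h⟩

lemma mIic_subset {ν ν' : Fin m → ℕ} (h : ∀ k, ν k ≤ ν' k) : mIic ν ⊆ mIic ν' := by
  intro β hβ
  rw [mem_mIic] at hβ ⊢
  exact fun k => le_trans (hβ k) (h k)

lemma mchoose_eq_zero {α β : Fin m → ℕ} (h : ¬ ∀ k, β k ≤ α k) : mchoose α β = 0 := by
  push_neg at h
  obtain ⟨k, hk⟩ := h
  exact Finset.prod_eq_zero (Finset.mem_univ k) (Nat.choose_eq_zero_of_lt hk)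

lemma mchoose_pascal (α β : Fin m → ℕ) (i : Fin m) :
    mchoose (inc α i) β = mchoose α β + if 0 < β i then mchoose α (dec β i) else 0 := by
  have e1 : ∀ (γ δ : Fin m → ℕ), mchoose γ δ
      = Nat.choose (γ i) (δ i) * ∏ k ∈ Finset.univ.erase i, Nat.choose (γ k) (δ k) :=
    fun γ δ => (Finset.mul_prod_erase _ _ (Finset.mem_univ i)).symm
  have hprod : (∏ k ∈ Finset.univ.erase i, Nat.choose (inc α i k) (β k))
      = ∏ k ∈ Finset.univ.erase i, Nat.choose (α k) (β k) :=
    Finset.prod_congr rfl (fun k hk => by rw [inc_other _ (Finset.ne_of_mem_erase hk)])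
  rcases Nat.eq_zero_or_pos (β i) with h0 | hpos
  · rw [e1, e1, hprod, if_neg (by omega), inc_self, h0, Nat.choose_zero_right,
      Nat.choose_zero_right, add_zero]
  · obtain ⟨b, hb⟩ := Nat.exists_eq_succ_of_ne_zero (Nat.pos_iff_ne_zero.mp hpos)
    have hprod2 : (∏ k ∈ Finset.univ.erase i, Nat.choose (α k) (dec β i k))
        = ∏ k ∈ Finset.univ.erase i, Nat.choose (α k) (β k) :=
      Finset.prod_congr rfl (fun k hk => by rw [dec_other _ (Finset.ne_of_mem_erase hk)])
    rw [e1, e1, e1, hprod, hprod2, if_pos hpos, inc_self, dec_self, hb]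
    simp only [Nat.succ_sub_one, Nat.choose_succ_succ]
    ring

end BCAux
namespace BCAux

variable {n m : ℕ} {X E F G : Type*} [NormedAddCommGroup X] [NormedSpace ℝ X]
  [NormedAddCommGroup E] [NormedSpace ℝ E] [NormedAddCommGroup F] [NormedSpace ℝ F]
  [NormedAddCommGroup G] [NormedSpace ℝ G]

lemma pascal_sum (α' : Fin m → ℕ) (i : Fin m) (T : (Fin m → ℕ) → (Fin m → ℕ) → X) :
    (∑ β ∈ mIic α', (mchoose α' β : ℝ) • (T (inc β i) (α' - β) + T β (inc (α' - β) i)))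
      = ∑ β ∈ mIic (inc α' i), (mchoose (inc α' i) β : ℝ) • T β (inc α' i - β) := by
  have hsub : mIic α' ⊆ mIic (inc α' i) :=
    mIic_subset (fun k => by by_cases h : k = i <;> simp [inc, h])
  have hR : ∀ β, (mchoose (inc α' i) β : ℝ) • T β (inc α' i - β)
      = (mchoose α' β : ℝ) • T β (inc α' i - β)
        + (if 0 < β i then (mchoose α' (dec β i) : ℝ) else 0) • T β (inc α' i - β) := by
    intro β
    rw [mchoose_pascal α' β i]
    push_cast
    rw [add_smul]
  rw [Finset.sum_congr rfl (fun β _ => hR β), Finset.sum_add_distrib]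
  have hS1 : (∑ β ∈ mIic (inc α' i), (mchoose α' β : ℝ) • T β (inc α' i - β))
      = ∑ β ∈ mIic α', (mchoose α' β : ℝ) • T β (inc (α' - β) i) := by
    rw [← Finset.sum_subset hsub]
    · refine Finset.sum_congr rfl (fun β hβ => ?_)
      have hle : ∀ k, β k ≤ α' k := mem_mIic.mp hβ
      have hidx : inc α' i - β = inc (α' - β) i := by
        funext k
        have h2 := hle k
        by_cases h : k = i
        · subst h; simp only [Pi.sub_apply, inc, if_pos rfl, eq_self_iff_true, if_true]; omega
        · simp only [Pi.sub_apply, inc, if_neg h]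
      rw [hidx]
    · intro β _ hnβ
      have hz : ¬ ∀ k, β k ≤ α' k := fun hc => hnβ (mem_mIic.mpr hc)
      rw [mchoose_eq_zero hz]
      simp
  have hS2 : (∑ β ∈ mIic (inc α' i),
        (if 0 < β i then (mchoose α' (dec β i) : ℝ) else 0) • T β (inc α' i - β))
      = ∑ β ∈ mIic α', (mchoose α' β : ℝ) • T (inc β i) (α' - β) := by
    have hite : ∀ β, (if 0 < β i then (mchoose α' (dec β i) : ℝ) else 0) • T β (inc α' i - β)
        = if 0 < β i then (mchoose α' (dec β i) : ℝ) • T β (inc α' i - β) else 0 := by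
      intro β
      split <;> simp
    rw [Finset.sum_congr rfl (fun β _ => hite β), ← Finset.sum_filter]
    refine Finset.sum_nbij' (fun β => dec β i) (fun γ => inc γ i) ?_ ?_ ?_ ?_ ?_
    · intro β hβ
      simp only [Finset.mem_filter] at hβ
      obtain ⟨hβm, hβi⟩ := hβ
      have hm := mem_mIic.mp hβm
      refine mem_mIic.mpr (fun k => ?_)
      have hk := hm k
      by_cases h : k = i
      · subst h
        simp only [inc, if_pos rfl, eq_self_iff_true, if_true] at hk
        simp only [dec, if_pos rfl, eq_self_iff_true, if_true]
        omega
      · simp only [inc, if_neg h] at hk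
        simp only [dec, if_neg h]
        omega
    · intro γ hγ
      have hm := mem_mIic.mp hγ
      simp only [Finset.mem_filter]
      refine ⟨mem_mIic.mpr (fun k => ?_), by simp [inc]⟩
      have hk := hm k
      by_cases h : k = i
      · subst h; simp only [inc, if_pos rfl, eq_self_iff_true, if_true]; omega
      · simp only [inc, if_neg h]; omega
    · intro β hβ
      simp only [Finset.mem_filter] at hβ
      obtain ⟨hβm, hβi⟩ := hβ
      funext k
      by_cases h : k = i
      · subst h; simp only [inc, dec, if_pos rfl, eq_self_iff_true, if_true]; omega
      · simp only [inc, dec, if_neg h]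
    · intro γ _
      funext k
      by_cases h : k = i
      · subst h; simp only [inc, dec, if_pos rfl, eq_self_iff_true, if_true]; omega
      · simp only [inc, dec, if_neg h]
    · intro β hβ
      simp only [Finset.mem_filter] at hβ
      obtain ⟨hβm, hβi⟩ := hβ
      have hm := mem_mIic.mp hβm
      have hrec : inc (dec β i) i = β := by
        funext k
        by_cases h : k = i
        · subst h; simp only [inc, dec, if_pos rfl, eq_self_iff_true, if_true]; omega
        · simp only [inc, dec, if_neg h]
      have hidx2 : α' - dec β i = inc α' i - β := by
        funext k
        have hβk := hm k
        by_cases h : k = i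
        · subst h
          simp only [inc, if_pos rfl, eq_self_iff_true, if_true] at hβk
          simp only [Pi.sub_apply, dec, inc, if_pos rfl, eq_self_iff_true, if_true]
          omega
        · simp only [Pi.sub_apply, dec, inc, if_neg h]
      rw [hrec, hidx2]
  rw [Finset.sum_congr rfl (fun β _ => smul_add ((mchoose α' β : ℝ)) _ _),
    Finset.sum_add_distrib, hS1, hS2, add_comm]

end BCAux
namespace BCAux

variable {n m : ℕ} {X E F G : Type*} [NormedAddCommGroup X] [NormedSpace ℝ X]
  [NormedAddCommGroup E] [NormedSpace ℝ E] [NormedAddCommGroup F] [NormedSpace ℝ F]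
  [NormedAddCommGroup G] [NormedSpace ℝ G]

def cnt (l : List (Fin m)) : Fin m → ℕ := fun k => l.count k

lemma cnt_cons (i : Fin m) (t : List (Fin m)) : cnt (i :: t) = inc (cnt t) i := by
  funext k
  rw [cnt, List.count_cons, inc]
  by_cases h : k = i
  · simp [h, cnt]
  · simp [h, cnt, Ne.symm h]

lemma mdeg_cnt (l : List (Fin m)) : mdeg (cnt l) = l.length := sum_count l

lemma mdeg_le_of_le {β ν : Fin m → ℕ} (h : ∀ k, β k ≤ ν k) : mdeg β ≤ mdeg ν :=
  Finset.sum_le_sum (fun k _ => h k)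

lemma mdeg_sub_le (ν β : Fin m → ℕ) : mdeg (ν - β) ≤ mdeg ν :=
  mdeg_le_of_le (fun k => Nat.sub_le _ _)

lemma mIic_zero : mIic (fun _ => (0 : ℕ) : Fin m → ℕ) = {fun _ => 0} := by
  ext β
  simp only [mem_mIic, Finset.mem_singleton, Nat.le_zero, funext_iff]

/-! primed pder lemmas, for rewriting -/

lemma pder_finsetSum' {ι : Type*} (s : Finset ι) (F : ι → Euc n → X)
    (h : ∀ j ∈ s, Differentiable ℝ (F j)) (i : Fin n) {H : Euc n → X}
    (hH : H = fun x => ∑ j ∈ s, F j x) :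
    pder i H = fun x => ∑ j ∈ s, pder i (F j) x := by
  rw [hH]; exact pder_finsetSum s F h i

lemma pder_smul' (c : ℝ) {f : Euc n → X} (hf : Differentiable ℝ f) (i : Fin n) {H : Euc n → X}
    (hH : H = fun x => c • f x) : pder i H = fun x => c • pder i f x := by
  rw [hH]; exact pder_smul c hf i

lemma pder_bilin' (B : E →L[ℝ] F →L[ℝ] G) {f : Euc n → E} {g : Euc n → F}
    (hf : Differentiable ℝ f) (hg : Differentiable ℝ g) (i : Fin n) {H : Euc n → G}
    (hH : H = fun x => B (f x) (g x)) :
    pder i H = fun x => B (pder i f x) (g x) + B (f x) (pder i g x) := by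
  rw [hH]; exact pder_bilin B hf hg i

lemma mder_differentiable {κ : ℕ} {f : Euc n → X} (hf : ContDiff ℝ (κ : ℕ∞) f)
    (β : Fin n → ℕ) (h : mdeg β + 1 ≤ κ) : Differentiable ℝ (mder β f) := by
  rw [mder_eq_dseq]
  exact (dseq_contDiff hf (canonList β) 1 (by rw [length_canonList]; omega)).differentiable
    (by simp)

lemma mder_continuous {κ : ℕ} {f : Euc n → X} (hf : ContDiff ℝ (κ : ℕ∞) f)
    (β : Fin n → ℕ) (h : mdeg β ≤ κ) : Continuous (mder β f) := by
  rw [mder_eq_dseq]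
  exact (dseq_contDiff hf (canonList β) 0 (by rw [length_canonList]; omega)).continuous

lemma dseq_leibniz {κ : ℕ} (B : E →L[ℝ] F →L[ℝ] G) {f : Euc n → E} {g : Euc n → F}
    (hf : ContDiff ℝ (κ : ℕ∞) f) (hg : ContDiff ℝ (κ : ℕ∞) g) :
    ∀ l : List (Fin n), l.length ≤ κ →
      dseq l (fun x => B (f x) (g x))
        = fun x => ∑ β ∈ mIic (cnt l),
            (mchoose (cnt l) β : ℝ) • B (mder β f x) (mder (cnt l - β) g x) := by
  intro l
  induction l with
  | nil =>
    intro _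
    funext x
    have h0 : cnt ([] : List (Fin n)) = fun _ => 0 := by
      funext k; rfl
    rw [dseq_nil, h0, mIic_zero, Finset.sum_singleton]
    have hch : mchoose (fun _ => (0 : ℕ) : Fin n → ℕ) (fun _ => 0) = 1 := by simp [mchoose]
    have hsub0 : ((fun (_ : Fin n) => (0 : ℕ)) - fun _ => 0) = (fun _ => (0 : ℕ)) := by
      funext k; simp
    rw [hch, hsub0, mder_zero_idx, mder_zero_idx]
    simp
  | cons i t ih =>
    intro hl
    have hlt : t.length ≤ κ := by simp at hl; omega
    have hmem : ∀ β ∈ mIic (cnt t), mdeg β ≤ t.length ∧ mdeg (cnt t - β) ≤ t.length := by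
      intro β hβ
      have h1 := mdeg_le_of_le (mem_mIic.mp hβ)
      have h2 := mdeg_sub_le (cnt t) β
      rw [mdeg_cnt] at h1 h2
      exact ⟨h1, h2⟩
    have hdf : ∀ β ∈ mIic (cnt t), Differentiable ℝ (mder β f) := fun β hβ =>
      mder_differentiable hf β (by have := (hmem β hβ).1; simp at hl; omega)
    have hdg : ∀ β ∈ mIic (cnt t), Differentiable ℝ (mder (cnt t - β) g) := fun β hβ =>
      mder_differentiable hg _ (by have := (hmem β hβ).2; simp at hl; omega)
    have hdiffs : ∀ β ∈ mIic (cnt t), Differentiable ℝ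
        (fun x => (mchoose (cnt t) β : ℝ) • B (mder β f x) (mder (cnt t - β) g x)) := by
      intro β hβ
      exact (((B.isBoundedBilinearMap.differentiable).comp
        ((hdf β hβ).prodMk (hdg β hβ)))).const_smul _
    rw [dseq_cons, ih hlt,
      pder_finsetSum' (mIic (cnt t))
        (fun β x => (mchoose (cnt t) β : ℝ) • B (mder β f x) (mder (cnt t - β) g x))
        hdiffs i rfl]
    have hterm : ∀ β ∈ mIic (cnt t),
        pder i (fun x => (mchoose (cnt t) β : ℝ) • B (mder β f x) (mder (cnt t - β) g x))
          = fun x => (mchoose (cnt t) β : ℝ) •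
              (B (mder (inc β i) f x) (mder (cnt t - β) g x)
                + B (mder β f x) (mder (inc (cnt t - β) i) g x)) := by
      intro β hβ
      have hBfg : Differentiable ℝ (fun x => B (mder β f x) (mder (cnt t - β) g x)) :=
        (B.isBoundedBilinearMap.differentiable).comp ((hdf β hβ).prodMk (hdg β hβ))
      rw [pder_smul' _ hBfg i rfl,
        pder_bilin' B (hdf β hβ) (hdg β hβ) i rfl,
        pder_mder hf i β (by have := (hmem β hβ).1; simp at hl; omega),
        pder_mder hg i (cnt t - β) (by have := (hmem β hβ).2; simp at hl; omega)]
    funext x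
    rw [Finset.sum_congr rfl (fun β hβ => congrFun (hterm β hβ) x), cnt_cons]
    exact pascal_sum (cnt t) i (fun β γ => B (mder β f x) (mder γ g x))

lemma mder_leibniz {κ : ℕ} (B : E →L[ℝ] F →L[ℝ] G) {f : Euc n → E} {g : Euc n → F}
    (hf : ContDiff ℝ (κ : ℕ∞) f) (hg : ContDiff ℝ (κ : ℕ∞) g) (α : Fin n → ℕ)
    (hα : mdeg α ≤ κ) :
    mder α (fun x => B (f x) (g x))
      = fun x => ∑ β ∈ mIic α, (mchoose α β : ℝ) • B (mder β f x) (mder (α - β) g x) := by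
  rw [mder_eq_dseq, dseq_leibniz B hf hg (canonList α) (by rw [length_canonList]; omega)]
  have hc : cnt (canonList α) = α := funext (count_canonList α)
  rw [hc]

end BCAux
namespace BCAux

variable {n m : ℕ} {X E F G : Type*} [NormedAddCommGroup X] [NormedSpace ℝ X]
  [NormedAddCommGroup E] [NormedSpace ℝ E] [NormedAddCommGroup F] [NormedSpace ℝ F]
  [NormedAddCommGroup G] [NormedSpace ℝ G]

lemma sobNorm_nonneg (η : ℕ) (p : ℝ≥0∞) (μ : Measure (Euc n)) (f : Euc n → X) :
    0 ≤ sobNorm η p μ f :=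
  Finset.sum_nonneg fun _ _ => mul_nonneg (inv_nonneg.mpr (Nat.cast_nonneg _))
    ENNReal.toReal_nonneg

lemma sobNorm_zero (η : ℕ) (p : ℝ≥0∞) (μ : Measure (Euc n)) :
    sobNorm η p μ (fun _ => (0 : X)) = 0 := by
  unfold sobNorm
  refine Finset.sum_eq_zero (fun α _ => ?_)
  rw [mder_zero_fun]
  simp [eLpNorm_zero']

lemma dseq_add {κ : ℕ} {f g : Euc n → X} (hf : ContDiff ℝ (κ : ℕ∞) f)
    (hg : ContDiff ℝ (κ : ℕ∞) g) :
    ∀ l : List (Fin n), l.length ≤ κ →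
      dseq l (fun x => f x + g x) = fun x => dseq l f x + dseq l g x := by
  intro l
  induction l with
  | nil => intro _; rfl
  | cons i t ih =>
    intro hl
    have hlt : t.length ≤ κ := by simp at hl; omega
    have h1 : Differentiable ℝ (dseq t f) :=
      (dseq_contDiff hf t 1 (by simp at hl; omega)).differentiable (by simp)
    have h2 : Differentiable ℝ (dseq t g) :=
      (dseq_contDiff hg t 1 (by simp at hl; omega)).differentiable (by simp)
    rw [dseq_cons, ih hlt]
    exact pder_add h1 h2 i

lemma mder_add {κ : ℕ} {f g : Euc n → X} (hf : ContDiff ℝ (κ : ℕ∞) f)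
    (hg : ContDiff ℝ (κ : ℕ∞) g) (α : Fin n → ℕ) (hα : mdeg α ≤ κ) :
    mder α (fun x => f x + g x) = fun x => mder α f x + mder α g x := by
  rw [mder_eq_dseq, mder_eq_dseq, mder_eq_dseq]
  exact dseq_add hf hg (canonList α) (by rw [length_canonList]; omega)

lemma dseq_smul {κ : ℕ} (c : ℝ) {f : Euc n → X} (hf : ContDiff ℝ (κ : ℕ∞) f) :
    ∀ l : List (Fin n), l.length ≤ κ →
      dseq l (fun x => c • f x) = fun x => c • dseq l f x := by
  intro l
  induction l with
  | nil => intro _; rfl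
  | cons i t ih =>
    intro hl
    have hlt : t.length ≤ κ := by simp at hl; omega
    have h1 : Differentiable ℝ (dseq t f) :=
      (dseq_contDiff hf t 1 (by simp at hl; omega)).differentiable (by simp)
    rw [dseq_cons, ih hlt]
    exact pder_smul c h1 i

lemma mder_smul {κ : ℕ} (c : ℝ) {f : Euc n → X} (hf : ContDiff ℝ (κ : ℕ∞) f)
    (α : Fin n → ℕ) (hα : mdeg α ≤ κ) :
    mder α (fun x => c • f x) = fun x => c • mder α f x := by
  rw [mder_eq_dseq, mder_eq_dseq]
  exact dseq_smul c hf (canonList α) (by rw [length_canonList]; omega)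

lemma dseq_finsetSum {κ : ℕ} {ι : Type*} (s : Finset ι) (F : ι → Euc n → X)
    (hF : ∀ j ∈ s, ContDiff ℝ (κ : ℕ∞) (F j)) :
    ∀ l : List (Fin n), l.length ≤ κ →
      dseq l (fun x => ∑ j ∈ s, F j x) = fun x => ∑ j ∈ s, dseq l (F j) x := by
  intro l
  induction l with
  | nil => intro _; rfl
  | cons i t ih =>
    intro hl
    have hlt : t.length ≤ κ := by simp at hl; omega
    have h1 : ∀ j ∈ s, Differentiable ℝ (dseq t (F j)) := fun j hj =>
      (dseq_contDiff (hF j hj) t 1 (by simp at hl; omega)).differentiable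
        (by simp)
    rw [dseq_cons, ih hlt, pder_finsetSum' s (fun j => dseq t (F j)) h1 i rfl]
    rfl

lemma mder_finsetSum {κ : ℕ} {ι : Type*} (s : Finset ι) (F : ι → Euc n → X)
    (hF : ∀ j ∈ s, ContDiff ℝ (κ : ℕ∞) (F j)) (α : Fin n → ℕ) (hα : mdeg α ≤ κ) :
    mder α (fun x => ∑ j ∈ s, F j x) = fun x => ∑ j ∈ s, mder α (F j) x := by
  have h := dseq_finsetSum s F hF (canonList α) (by rw [length_canonList]; omega)
  rw [mder_eq_dseq, h]
  funext x
  exact Finset.sum_congr rfl (fun j _ => by rw [mder_eq_dseq])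

lemma memW_add {κ : ℕ} {μ : Measure (Euc n)} {f g : Euc n → X}
    (hf : ContDiff ℝ (κ : ℕ∞) f) (hg : ContDiff ℝ (κ : ℕ∞) g)
    (hfW : MemW κ ⊤ μ f) (hgW : MemW κ ⊤ μ g) :
    MemW κ ⊤ μ (fun x => f x + g x)
      ∧ sobNorm κ ⊤ μ (fun x => f x + g x) ≤ sobNorm κ ⊤ μ f + sobNorm κ ⊤ μ g := by
  constructor
  · intro α hα
    rw [mder_add hf hg α (mem_mIdx.mp hα)]
    exact (hfW α hα).add (hgW α hα)
  · unfold sobNorm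
    rw [← Finset.sum_add_distrib]
    refine Finset.sum_le_sum (fun α hα => ?_)
    rw [mder_add hf hg α (mem_mIdx.mp hα), ← mul_add]
    refine mul_le_mul_of_nonneg_left ?_ (inv_nonneg.mpr (Nat.cast_nonneg _))
    have h2 : eLpNorm (mder α f) ⊤ μ ≠ ⊤ := ne_of_lt (hfW α hα).2
    have h3 : eLpNorm (mder α g) ⊤ μ ≠ ⊤ := ne_of_lt (hgW α hα).2
    have h1 : eLpNorm (fun x => mder α f x + mder α g x) ⊤ μ
        ≤ eLpNorm (mder α f) ⊤ μ + eLpNorm (mder α g) ⊤ μ :=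
      eLpNorm_add_le (hfW α hα).aestronglyMeasurable (hgW α hα).aestronglyMeasurable le_top
    calc (eLpNorm (fun x => mder α f x + mder α g x) ⊤ μ).toReal
        ≤ (eLpNorm (mder α f) ⊤ μ + eLpNorm (mder α g) ⊤ μ).toReal :=
          ENNReal.toReal_mono (by finiteness) h1
      _ = (eLpNorm (mder α f) ⊤ μ).toReal + (eLpNorm (mder α g) ⊤ μ).toReal :=
          ENNReal.toReal_add h2 h3

lemma memW_smul {κ : ℕ} {μ : Measure (Euc n)} (c : ℝ) {f : Euc n → X}
    (hf : ContDiff ℝ (κ : ℕ∞) f) (hfW : MemW κ ⊤ μ f) :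
    MemW κ ⊤ μ (fun x => c • f x)
      ∧ sobNorm κ ⊤ μ (fun x => c • f x) = |c| * sobNorm κ ⊤ μ f := by
  constructor
  · intro α hα
    rw [mder_smul c hf α (mem_mIdx.mp hα)]
    exact (hfW α hα).const_smul c
  · unfold sobNorm
    rw [Finset.mul_sum]
    refine Finset.sum_congr rfl (fun α hα => ?_)
    rw [mder_smul c hf α (mem_mIdx.mp hα)]
    have : eLpNorm (fun x => c • mder α f x) ⊤ μ = ‖c‖₊ • eLpNorm (mder α f) ⊤ μ :=
      eLpNorm_const_smul c (mder α f) ⊤ μ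
    rw [this, ENNReal.smul_def, smul_eq_mul, ENNReal.toReal_mul]
    simp only [ENNReal.coe_toReal, coe_nnnorm, Real.norm_eq_abs]
    ring

lemma memW_finsetSum {κ : ℕ} {μ : Measure (Euc n)} {ι : Type*} (s : Finset ι)
    (F : ι → Euc n → X) (hF : ∀ j ∈ s, ContDiff ℝ (κ : ℕ∞) (F j))
    (hFW : ∀ j ∈ s, MemW κ ⊤ μ (F j)) :
    MemW κ ⊤ μ (fun x => ∑ j ∈ s, F j x)
      ∧ sobNorm κ ⊤ μ (fun x => ∑ j ∈ s, F j x) ≤ ∑ j ∈ s, sobNorm κ ⊤ μ (F j) := by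
  classical
  induction s using Finset.induction_on with
  | empty =>
    constructor
    · intro α hα
      simp only [Finset.sum_empty]
      rw [mder_zero_fun]
      exact MemLp.zero
    · simp only [Finset.sum_empty, sobNorm_zero]
      exact le_rfl
  | @insert a s ha ih =>
    have hFa := hF a (Finset.mem_insert_self a s)
    have hFWa := hFW a (Finset.mem_insert_self a s)
    have hFs : ∀ j ∈ s, ContDiff ℝ (κ : ℕ∞) (F j) := fun j hj =>
      hF j (Finset.mem_insert_of_mem hj)
    have hFWs : ∀ j ∈ s, MemW κ ⊤ μ (F j) := fun j hj => hFW j (Finset.mem_insert_of_mem hj)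
    obtain ⟨ihW, ihN⟩ := ih hFs hFWs
    have hrw : (fun x => ∑ j ∈ insert a s, F j x)
        = fun x => F a x + ∑ j ∈ s, F j x := by
      funext x; rw [Finset.sum_insert ha]
    have hsumCD : ContDiff ℝ (κ : ℕ∞) (fun x => ∑ j ∈ s, F j x) := ContDiff.sum hFs
    obtain ⟨hW, hN⟩ := memW_add hFa hsumCD hFWa ihW
    rw [hrw]
    refine ⟨hW, le_trans hN ?_⟩
    rw [Finset.sum_insert ha]
    exact (add_le_add_iff_left _).mpr ihN

lemma mfact_pos (α : Fin m → ℕ) : 0 < mfact α :=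
  Finset.prod_pos fun _ _ => Nat.factorial_pos _

lemma mfact_inv_mchoose {α β : Fin m → ℕ} (h : ∀ k, β k ≤ α k) :
    (mfact α : ℝ)⁻¹ * (mchoose α β : ℝ) = (mfact β : ℝ)⁻¹ * (mfact (α - β) : ℝ)⁻¹ := by
  have hnat : mchoose α β * (mfact β * mfact (α - β)) = mfact α := by
    unfold mchoose mfact
    rw [← Finset.prod_mul_distrib, ← Finset.prod_mul_distrib]
    refine Finset.prod_congr rfl (fun k _ => ?_)
    have hk := Nat.choose_mul_factorial_mul_factorial (h k)
    rw [Pi.sub_apply, ← hk]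
    ring
  have hcast : (mchoose α β : ℝ) * ((mfact β : ℝ) * (mfact (α - β) : ℝ)) = (mfact α : ℝ) := by
    exact_mod_cast congrArg (Nat.cast : ℕ → ℝ) hnat
  have h1 : (mfact α : ℝ) ≠ 0 := Nat.cast_ne_zero.mpr (Nat.pos_iff_ne_zero.mp (mfact_pos α))
  have h2 : (mfact β : ℝ) ≠ 0 := Nat.cast_ne_zero.mpr (Nat.pos_iff_ne_zero.mp (mfact_pos β))
  have h3 : (mfact (α - β) : ℝ) ≠ 0 :=
    Nat.cast_ne_zero.mpr (Nat.pos_iff_ne_zero.mp (mfact_pos (α - β)))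
  field_simp
  linear_combination hcast

end BCAux
namespace BCAux

variable {n m : ℕ} {X E F G : Type*} [NormedAddCommGroup X] [NormedSpace ℝ X]
  [NormedAddCommGroup E] [NormedSpace ℝ E] [NormedAddCommGroup F] [NormedSpace ℝ F]
  [NormedAddCommGroup G] [NormedSpace ℝ G]

lemma memW_sobNorm_bilin {κ : ℕ} {μ : Measure (Euc n)} (B : E →L[ℝ] F →L[ℝ] G)
    (hB : ∀ v w, ‖B v w‖ ≤ ‖v‖ * ‖w‖) {f : Euc n → E} {g : Euc n → F}
    (hf : ContDiff ℝ (κ : ℕ∞) f) (hg : ContDiff ℝ (κ : ℕ∞) g)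
    (hfW : MemW κ ⊤ μ f) (hgW : MemW κ ⊤ μ g) :
    MemW κ ⊤ μ (fun x => B (f x) (g x))
      ∧ sobNorm κ ⊤ μ (fun x => B (f x) (g x)) ≤ sobNorm κ ⊤ μ f * sobNorm κ ⊤ μ g := by
  set Nf : (Fin n → ℕ) → ℝ := fun β => (eLpNorm (mder β f) ⊤ μ).toReal with hNf
  set Ng : (Fin n → ℕ) → ℝ := fun β => (eLpNorm (mder β g) ⊤ μ).toReal with hNg
  have hNf0 : ∀ β, 0 ≤ Nf β := fun β => ENNReal.toReal_nonneg
  have hNg0 : ∀ β, 0 ≤ Ng β := fun β => ENNReal.toReal_nonneg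
  have hsub : ∀ {α : Fin n → ℕ}, α ∈ mIdx n κ → ∀ β ∈ mIic α,
      β ∈ mIdx n κ ∧ (α - β) ∈ mIdx n κ := by
    intro α hα β hβ
    have h1 := mdeg_le_of_le (mem_mIic.mp hβ)
    have h2 := mdeg_sub_le α β
    have h3 := mem_mIdx.mp hα
    exact ⟨mem_mIdx.mpr (by omega), mem_mIdx.mpr (by omega)⟩
  have haef : ∀ α ∈ mIdx n κ, ∀ᵐ x ∂μ, ∀ β ∈ mIic α, ‖mder β f x‖ ≤ Nf β := by
    intro α hα
    have := (MeasureTheory.ae_ball_iff (μ := μ) (Finset.countable_toSet (mIic α))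
      (p := fun x β _ => ‖mder β f x‖ ≤ Nf β)).mpr ?_
    · filter_upwards [this] with x hx β hβ
      exact hx β (Finset.mem_coe.mpr hβ)
    · intro β hβ
      have hmem := (hsub hα β (Finset.mem_coe.mp hβ)).1
      have hfin : eLpNorm (mder β f) ⊤ μ < ⊤ := (hfW β hmem).2
      filter_upwards [ENNReal.ae_le_essSup (μ := μ) (fun x => (‖mder β f x‖₊ : ℝ≥0∞))] with x hx
      have hle : (‖mder β f x‖₊ : ℝ≥0∞) ≤ eLpNorm (mder β f) ⊤ μ := by
        rw [eLpNorm_exponent_top, eLpNormEssSup]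
        exact hx
      calc ‖mder β f x‖ = ((‖mder β f x‖₊ : ℝ≥0∞)).toReal := by simp
        _ ≤ Nf β := ENNReal.toReal_mono (ne_of_lt hfin) hle
  have haeg : ∀ α ∈ mIdx n κ, ∀ᵐ x ∂μ, ∀ β ∈ mIic α, ‖mder (α - β) g x‖ ≤ Ng (α - β) := by
    intro α hα
    have := (MeasureTheory.ae_ball_iff (μ := μ) (Finset.countable_toSet (mIic α))
      (p := fun x β _ => ‖mder (α - β) g x‖ ≤ Ng (α - β))).mpr ?_
    · filter_upwards [this] with x hx β hβ
      exact hx β (Finset.mem_coe.mpr hβ)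
    · intro β hβ
      have hmem := (hsub hα β (Finset.mem_coe.mp hβ)).2
      have hfin : eLpNorm (mder (α - β) g) ⊤ μ < ⊤ := (hgW _ hmem).2
      filter_upwards [ENNReal.ae_le_essSup (μ := μ) (fun x => (‖mder (α - β) g x‖₊ : ℝ≥0∞))] with x hx
      have hle : (‖mder (α - β) g x‖₊ : ℝ≥0∞) ≤ eLpNorm (mder (α - β) g) ⊤ μ := by
        rw [eLpNorm_exponent_top, eLpNormEssSup]
        exact hx
      calc ‖mder (α - β) g x‖ = ((‖mder (α - β) g x‖₊ : ℝ≥0∞)).toReal := by simp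
        _ ≤ Ng (α - β) := ENNReal.toReal_mono (ne_of_lt hfin) hle
  have hae : ∀ α ∈ mIdx n κ, ∀ᵐ x ∂μ,
      ‖mder α (fun x => B (f x) (g x)) x‖
        ≤ ∑ β ∈ mIic α, (mchoose α β : ℝ) * (Nf β * Ng (α - β)) := by
    intro α hα
    filter_upwards [haef α hα, haeg α hα] with x hxf hxg
    rw [mder_leibniz B hf hg α (mem_mIdx.mp hα)]
    calc ‖∑ β ∈ mIic α, (mchoose α β : ℝ) • B (mder β f x) (mder (α - β) g x)‖
        ≤ ∑ β ∈ mIic α, ‖(mchoose α β : ℝ) • B (mder β f x) (mder (α - β) g x)‖ :=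
          norm_sum_le _ _
      _ ≤ ∑ β ∈ mIic α, (mchoose α β : ℝ) * (Nf β * Ng (α - β)) := by
          refine Finset.sum_le_sum (fun β hβ => ?_)
          rw [norm_smul, Real.norm_natCast]
          refine mul_le_mul_of_nonneg_left ?_ (Nat.cast_nonneg _)
          calc ‖B (mder β f x) (mder (α - β) g x)‖
              ≤ ‖mder β f x‖ * ‖mder (α - β) g x‖ := hB _ _
            _ ≤ Nf β * Ng (α - β) :=
                mul_le_mul (hxf β hβ) (hxg β hβ) (norm_nonneg _) (hNf0 β)
  have hBfgCD : ContDiff ℝ (κ : ℕ∞) (fun x => B (f x) (g x)) :=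
    B.isBoundedBilinearMap.contDiff.comp (hf.prodMk hg)
  have hW : MemW κ ⊤ μ (fun x => B (f x) (g x)) := by
    intro α hα
    refine memLp_top_of_bound ?_ _ (hae α hα)
    exact (mder_continuous hBfgCD α (mem_mIdx.mp hα)).aestronglyMeasurable
  refine ⟨hW, ?_⟩
  have hbound : ∀ α ∈ mIdx n κ,
      (eLpNorm (mder α (fun x => B (f x) (g x))) ⊤ μ).toReal
        ≤ ∑ β ∈ mIic α, (mchoose α β : ℝ) * (Nf β * Ng (α - β)) := by
    intro α hα
    have hb0 : (0:ℝ) ≤ ∑ β ∈ mIic α, (mchoose α β : ℝ) * (Nf β * Ng (α - β)) :=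
      Finset.sum_nonneg fun β _ => mul_nonneg (Nat.cast_nonneg _)
        (mul_nonneg (hNf0 β) (hNg0 _))
    refine ENNReal.toReal_le_of_le_ofReal hb0 ?_
    rw [eLpNorm_exponent_top]
    exact eLpNormEssSup_le_of_ae_bound (hae α hα)
  unfold sobNorm
  calc ∑ α ∈ mIdx n κ, (mfact α : ℝ)⁻¹ * (eLpNorm (mder α fun x => B (f x) (g x)) ⊤ μ).toReal
      ≤ ∑ α ∈ mIdx n κ, (mfact α : ℝ)⁻¹
          * ∑ β ∈ mIic α, (mchoose α β : ℝ) * (Nf β * Ng (α - β)) :=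
        Finset.sum_le_sum fun α hα => mul_le_mul_of_nonneg_left (hbound α hα)
          (inv_nonneg.mpr (Nat.cast_nonneg _))
    _ = ∑ α ∈ mIdx n κ, ∑ β ∈ mIic α,
          ((mfact β : ℝ)⁻¹ * Nf β) * ((mfact (α - β) : ℝ)⁻¹ * Ng (α - β)) := by
        refine Finset.sum_congr rfl (fun α hα => ?_)
        rw [Finset.mul_sum]
        refine Finset.sum_congr rfl (fun β hβ => ?_)
        rw [← mul_assoc, mfact_inv_mchoose (mem_mIic.mp hβ)]
        ring
    _ ≤ (∑ β ∈ mIdx n κ, (mfact β : ℝ)⁻¹ * Nf β)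
          * ∑ γ ∈ mIdx n κ, (mfact γ : ℝ)⁻¹ * Ng γ := by
        have hKnn : ∀ q : (Fin n → ℕ) × (Fin n → ℕ),
            (0:ℝ) ≤ ((mfact q.1 : ℝ)⁻¹ * Nf q.1) * ((mfact q.2 : ℝ)⁻¹ * Ng q.2) := fun q =>
          mul_nonneg (mul_nonneg (inv_nonneg.mpr (Nat.cast_nonneg _)) (hNf0 _))
            (mul_nonneg (inv_nonneg.mpr (Nat.cast_nonneg _)) (hNg0 _))
        have hinj' : ∀ p ∈ (mIdx n κ).sigma (fun α => mIic α),
            ∀ q ∈ (mIdx n κ).sigma (fun α => mIic α),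
            (fun p : (_ : Fin n → ℕ) × (Fin n → ℕ) => (p.2, p.1 - p.2)) p
              = (fun p : (_ : Fin n → ℕ) × (Fin n → ℕ) => (p.2, p.1 - p.2)) q → p = q := by
          intro p hp q hq h
          have e1 : p.2 = q.2 := congrArg Prod.fst h
          have e2 : p.1 - p.2 = q.1 - q.2 := congrArg Prod.snd h
          have hp2 := mem_mIic.mp (Finset.mem_sigma.mp hp).2
          have hq2 := mem_mIic.mp (Finset.mem_sigma.mp hq).2
          have e3 : p.1 = q.1 := by
            funext k
            have := congrFun e2 k
            have := congrFun e1 k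
            have := hp2 k
            have := hq2 k
            simp only [Pi.sub_apply] at *
            omega
          exact Sigma.ext e3 (heq_of_eq e1)
        have himg : ((mIdx n κ).sigma (fun α => mIic α)).image
              (fun p : (_ : Fin n → ℕ) × (Fin n → ℕ) => (p.2, p.1 - p.2))
            ⊆ (mIdx n κ) ×ˢ (mIdx n κ) := by
          refine Finset.image_subset_iff.mpr (fun p hp => ?_)
          have hm := Finset.mem_sigma.mp hp
          exact Finset.mem_product.mpr ⟨(hsub hm.1 p.2 hm.2).1, (hsub hm.1 p.2 hm.2).2⟩
        rw [Finset.sum_sigma']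
        rw [Finset.sum_mul_sum]
        calc ∑ p ∈ (mIdx n κ).sigma (fun α => mIic α),
              ((mfact p.2 : ℝ)⁻¹ * Nf p.2) * ((mfact (p.1 - p.2) : ℝ)⁻¹ * Ng (p.1 - p.2))
            = ∑ q ∈ ((mIdx n κ).sigma (fun α => mIic α)).image
                (fun p : (_ : Fin n → ℕ) × (Fin n → ℕ) => (p.2, p.1 - p.2)),
                ((mfact q.1 : ℝ)⁻¹ * Nf q.1) * ((mfact q.2 : ℝ)⁻¹ * Ng q.2) :=
              (Finset.sum_image (f := fun q : (Fin n → ℕ) × (Fin n → ℕ) =>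
                ((mfact q.1 : ℝ)⁻¹ * Nf q.1) * ((mfact q.2 : ℝ)⁻¹ * Ng q.2)) hinj').symm
          _ ≤ ∑ q ∈ (mIdx n κ) ×ˢ (mIdx n κ),
                ((mfact q.1 : ℝ)⁻¹ * Nf q.1) * ((mfact q.2 : ℝ)⁻¹ * Ng q.2) :=
              Finset.sum_le_sum_of_subset_of_nonneg himg (fun q _ _ => hKnn q)
          _ = ∑ β ∈ mIdx n κ, ∑ γ ∈ mIdx n κ,
                ((mfact β : ℝ)⁻¹ * Nf β) * ((mfact γ : ℝ)⁻¹ * Ng γ) := by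
              rw [Finset.sum_product]

end BCAux
namespace BCAux

variable {n m : ℕ} {X E F G : Type*} [NormedAddCommGroup X] [NormedSpace ℝ X]
  [NormedAddCommGroup E] [NormedSpace ℝ E] [NormedAddCommGroup F] [NormedSpace ℝ F]
  [NormedAddCommGroup G] [NormedSpace ℝ G]

def Wfun (u0 : E) (u : Fin m → E) : Euc m → E := fun y => u0 + ∑ k, y k • u k

lemma W_eq_clm (u0 : E) (u : Fin m → E) :
    Wfun u0 u = fun y =>
      u0 + (∑ k, (EuclideanSpace.proj k : Euc m →L[ℝ] ℝ).smulRight (u k)) y := by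
  funext y
  simp [Wfun, ContinuousLinearMap.sum_apply, ContinuousLinearMap.smulRight_apply]

lemma W_differentiable (u0 : E) (u : Fin m → E) : Differentiable ℝ (Wfun u0 u) := by
  rw [W_eq_clm]
  exact (differentiable_const _).add
    (∑ k, (EuclideanSpace.proj k : Euc m →L[ℝ] ℝ).smulRight (u k)).differentiable

lemma pder_W (u0 : E) (u : Fin m → E) (i : Fin m) : pder i (Wfun u0 u) = fun _ => u i := by
  funext y
  simp only [pder]
  have hL : fderiv ℝ (Wfun u0 u) y
      = ∑ k, (EuclideanSpace.proj k : Euc m →L[ℝ] ℝ).smulRight (u k) := by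
    rw [W_eq_clm, fderiv_const_add]
    exact ContinuousLinearMap.fderiv _
  rw [hL, ContinuousLinearMap.sum_apply]
  simp only [ContinuousLinearMap.smulRight_apply]
  have hp : ∀ k : Fin m, (EuclideanSpace.proj k : Euc m →L[ℝ] ℝ) (EuclideanSpace.single i 1)
      = if k = i then 1 else 0 := by
    intro k
    simp [EuclideanSpace.single_apply]
  simp only [hp, ite_smul, one_smul, zero_smul]
  simp

lemma quad_pder (B : E →L[ℝ] E →L[ℝ] X) (u0 : E) (u : Fin m → E) (i : Fin m) :
    pder i (fun y => B (Wfun u0 u y) (Wfun u0 u y))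
      = fun y => B (u i) (Wfun u0 u y) + B (Wfun u0 u y) (u i) := by
  rw [pder_bilin B (W_differentiable u0 u) (W_differentiable u0 u) i, pder_W]

lemma lin_diff_left (B : E →L[ℝ] E →L[ℝ] X) (u0 : E) (u : Fin m → E) (c : E) :
    Differentiable ℝ (fun y => B c (Wfun u0 u y)) :=
  (B c).differentiable.comp (W_differentiable u0 u)

lemma lin_diff_right (B : E →L[ℝ] E →L[ℝ] X) (u0 : E) (u : Fin m → E) (c : E) :
    Differentiable ℝ (fun y => B (Wfun u0 u y) c) :=
  (B.flip c).differentiable.comp (W_differentiable u0 u)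

lemma lin_pder_left (B : E →L[ℝ] E →L[ℝ] X) (u0 : E) (u : Fin m → E) (c : E) (i : Fin m) :
    pder i (fun y => B c (Wfun u0 u y)) = fun _ => B c (u i) := by
  rw [pder_clm (B c) (W_differentiable u0 u) i, pder_W]

lemma lin_pder_right (B : E →L[ℝ] E →L[ℝ] X) (u0 : E) (u : Fin m → E) (c : E) (i : Fin m) :
    pder i (fun y => B (Wfun u0 u y) c) = fun _ => B (u i) c := by
  have h : (fun y => B (Wfun u0 u y) c) = fun y => (B.flip c) (Wfun u0 u y) := by
    funext y
    simp
  rw [h, pder_clm (B.flip c) (W_differentiable u0 u) i, pder_W]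
  funext y
  simp

lemma dseq_two (B : E →L[ℝ] E →L[ℝ] X) (u0 : E) (u : Fin m → E) (i j : Fin m) :
    dseq [i, j] (fun y => B (Wfun u0 u y) (Wfun u0 u y))
      = fun _ => B (u j) (u i) + B (u i) (u j) := by
  have h1 : dseq [i, j] (fun y => B (Wfun u0 u y) (Wfun u0 u y))
      = pder i (pder j (fun y => B (Wfun u0 u y) (Wfun u0 u y))) := rfl
  rw [h1, quad_pder, pder_add (lin_diff_left B u0 u (u j)) (lin_diff_right B u0 u (u j)) i,
    lin_pder_left, lin_pder_right]

lemma dseq_three (B : E →L[ℝ] E →L[ℝ] X) (u0 : E) (u : Fin m → E) (i j k : Fin m) :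
    dseq [i, j, k] (fun y => B (Wfun u0 u y) (Wfun u0 u y)) = fun _ => 0 := by
  have h1 : dseq [i, j, k] (fun y => B (Wfun u0 u y) (Wfun u0 u y))
      = pder i (dseq [j, k] (fun y => B (Wfun u0 u y) (Wfun u0 u y))) := rfl
  rw [h1, dseq_two, pder_const]

lemma dseq_ge3 (B : E →L[ℝ] E →L[ℝ] X) (u0 : E) (u : Fin m → E) (t : List (Fin m))
    (i j k : Fin m) :
    dseq (t ++ [i, j, k]) (fun y => B (Wfun u0 u y) (Wfun u0 u y)) = fun _ => 0 := by
  rw [dseq_append, dseq_three, dseq_zero]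

lemma list_shape {A : Type*} (l : List A) :
    l = [] ∨ (∃ i, l = [i]) ∨ (∃ i j, l = [i, j]) ∨ ∃ t i j k, l = t ++ [i, j, k] := by
  rcases hl : l.reverse with _ | ⟨a, t1⟩
  · left
    simpa using congrArg List.reverse hl
  · rcases t1 with _ | ⟨b, t2⟩
    · right; left
      exact ⟨a, by simpa using congrArg List.reverse hl⟩
    · rcases t2 with _ | ⟨c, t3⟩
      · right; right; left
        exact ⟨b, a, by simpa using congrArg List.reverse hl⟩
      · right; right; right
        refine ⟨t3.reverse, c, b, a, ?_⟩
        have := congrArg List.reverse hl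
        simpa using this

end BCAux
namespace BCAux

set_option maxHeartbeats 1000000 in
lemma master {d mM κ : ℕ} (hκ : 1 ≤ κ)
    (D : Set (Euc d))
    (P : Measure (Euc mM)) [IsProbabilityMeasure P] (hP : P (box mM)ᶜ = 0)
    (ψ₀ : Euc d → Euc d) (ψ : Fin mM → Euc d → Euc d) (σ : Fin mM → ℝ)
    (hψ₀ : ContDiff ℝ (κ : ℕ∞) ψ₀) (hψ : ∀ k, ContDiff ℝ (κ : ℕ∞) (ψ k))
    (hψ₀W : MemW κ ⊤ (volume.restrict D) ψ₀)
    (hψW : ∀ k, MemW κ ⊤ (volume.restrict D) (fun x => σ k • ψ k x))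
    (γ₀ : ℝ) (γ : Fin mM → ℝ)
    (hγ₀ : γ₀ = sobNorm κ ⊤ (volume.restrict D) ψ₀)
    (hγ : ∀ k, γ k = sobNorm κ ⊤ (volume.restrict D) (fun x => σ k • ψ k x))
    (cγ : ℝ) (hcγ : cγ = max (γ₀ + ∑ k, γ k) 2)
    (V : Euc mM → Euc d → Euc d)
    (hV : ∀ y x, V y x = ψ₀ x + ∑ k, (σ k * y k) • ψ k x)
    {X : Type*} [NormedAddCommGroup X] [NormedSpace ℝ X]
    (B : Euc d →L[ℝ] Euc d →L[ℝ] X)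
    (hB : ∀ v w, ‖B v w‖ ≤ ‖v‖ * ‖w‖)
    (α : Fin mM → ℕ) :
    tnorm κ ⊤ (volume.restrict D) P (pyder α (fun y x => B (V y x) (V y x)))
      ≤ cγ ^ 2 * ∏ k, γ k ^ α k := by
  set μ := volume.restrict D with hμ
  have hγ₀0 : 0 ≤ γ₀ := hγ₀ ▸ sobNorm_nonneg κ ⊤ μ ψ₀
  have hγk0 : ∀ k, 0 ≤ γ k := fun k => (hγ k) ▸ sobNorm_nonneg κ ⊤ μ _
  have hsum : γ₀ + ∑ k, γ k ≤ cγ := hcγ ▸ le_max_left _ _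
  have hcγ2 : (2:ℝ) ≤ cγ := hcγ ▸ le_max_right _ _
  have hcγ0 : (0:ℝ) ≤ cγ := by linarith
  have hprod0 : 0 ≤ ∏ k, γ k ^ α k := Finset.prod_nonneg fun k _ => pow_nonneg (hγk0 k) _
  have hRHS0 : 0 ≤ cγ ^ 2 * ∏ k, γ k ^ α k := mul_nonneg (by positivity) hprod0
  have hbox : ∀ᵐ y ∂P, y ∈ box mM := by
    rw [MeasureTheory.ae_iff]
    exact hP
  unfold tnorm
  refine ENNReal.toReal_le_of_le_ofReal hRHS0 ?_
  refine essSup_le_of_ae_le _ ?_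
  filter_upwards [hbox] with y hy
  refine ENNReal.ofReal_le_ofReal ?_
  -- rewrite the parametric derivative via dseq
  have hpy : pyder α (fun y x => B (V y x) (V y x)) y
      = fun x => dseq (canonList α)
          (fun y' => B (Wfun (ψ₀ x) (fun k => σ k • ψ k x) y')
            (Wfun (ψ₀ x) (fun k => σ k • ψ k x) y')) y := by
    funext x
    have hfun : (fun y' => B (V y' x) (V y' x))
        = fun y' => B (Wfun (ψ₀ x) (fun k => σ k • ψ k x) y')
            (Wfun (ψ₀ x) (fun k => σ k • ψ k x) y') := by
      funext y'
      have hVu : V y' x = Wfun (ψ₀ x) (fun k => σ k • ψ k x) y' := by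
        rw [hV, Wfun]
        congr 1
        refine Finset.sum_congr rfl (fun k _ => ?_)
        rw [smul_smul, mul_comm]
      rw [hVu]
    show mder α (fun y' => B (V y' x) (V y' x)) y = _
    rw [hfun, mder_eq_dseq]
  rw [hpy]
  -- x-level data
  set Vy : Euc d → Euc d := fun x => ψ₀ x + ∑ k, y k • (σ k • ψ k x) with hVydef
  have hukCD : ∀ k, ContDiff ℝ (κ : ℕ∞) (fun x => σ k • ψ k x) :=
    fun k => (hψ k).const_smul (σ k)
  have hsmulCD : ∀ k, ContDiff ℝ (κ : ℕ∞) (fun x => y k • (σ k • ψ k x)) :=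
    fun k => (hukCD k).const_smul (y k)
  have hVyCD : ContDiff ℝ (κ : ℕ∞) Vy :=
    ContDiff.add hψ₀ (ContDiff.sum fun k _ => hsmulCD k)
  have hsmulW : ∀ k, MemW κ ⊤ μ (fun x => y k • (σ k • ψ k x)) :=
    fun k => (memW_smul (y k) (hukCD k) (hψW k)).1
  obtain ⟨hsumW, hsumN⟩ := memW_finsetSum Finset.univ
    (fun k (x : Euc d) => y k • (σ k • ψ k x)) (fun k _ => hsmulCD k) (fun k _ => hsmulW k)
  obtain ⟨hVyW, hVyN⟩ := memW_add hψ₀ (ContDiff.sum fun k _ => hsmulCD k) hψ₀W hsumW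
  have hVyNle : sobNorm κ ⊤ μ Vy ≤ cγ := by
    refine le_trans hVyN (le_trans ?_ hsum)
    refine add_le_add (le_of_eq hγ₀.symm) (le_trans hsumN (Finset.sum_le_sum fun k _ => ?_))
    rw [(memW_smul (y k) (hukCD k) (hψW k)).2, ← hγ k]
    have hyk : |y k| ≤ 1 := abs_le.mpr ⟨(hy k).1, (hy k).2⟩
    calc |y k| * γ k ≤ 1 * γ k := mul_le_mul_of_nonneg_right hyk (hγk0 k)
      _ = γ k := one_mul _
  have hVy0 : 0 ≤ sobNorm κ ⊤ μ Vy := sobNorm_nonneg _ _ _ _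
  have hsuk : ∀ k, sobNorm κ ⊤ μ (fun x => σ k • ψ k x) = γ k := fun k => (hγ k).symm
  -- case analysis on the derivative order
  rcases list_shape (canonList α) with h0 | ⟨i, h1⟩ | ⟨i, j, h2⟩ | ⟨t, i, j, k, h3⟩
  · -- α = 0
    have hprod1 : (∏ k, γ k ^ α k) = 1 := by
      refine Finset.prod_eq_one fun k _ => ?_
      rw [← count_canonList α k, h0, List.count_nil, pow_zero]
    rw [h0, hprod1, mul_one]
    have hb := (memW_sobNorm_bilin B hB hVyCD hVyCD hVyW hVyW).2
    calc sobNorm κ ⊤ μ (fun x => B (Vy x) (Vy x)) ≤ sobNorm κ ⊤ μ Vy * sobNorm κ ⊤ μ Vy := hb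
      _ ≤ cγ * cγ := mul_le_mul hVyNle hVyNle hVy0 hcγ0
      _ = cγ ^ 2 := (sq cγ).symm
  · -- |α| = 1
    have hprod : (∏ k, γ k ^ α k) = γ i := by
      have hcnt : ∀ k, α k = List.count k [i] := fun k => by rw [← count_canonList α k, h1]
      calc (∏ k, γ k ^ α k) = ∏ k, γ k ^ List.count k [i] :=
            Finset.prod_congr rfl (fun k _ => by rw [hcnt k])
        _ = ([i].map γ).prod := prod_pow_count γ [i]
        _ = γ i := by simp
    have hform : (fun x => dseq [i]
          (fun y' => B (Wfun (ψ₀ x) (fun k => σ k • ψ k x) y')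
            (Wfun (ψ₀ x) (fun k => σ k • ψ k x) y')) y)
        = fun x => B (σ i • ψ i x) (Vy x) + B (Vy x) (σ i • ψ i x) :=
      funext fun x => congrFun (quad_pder B (ψ₀ x) (fun k => σ k • ψ k x) i) y
    rw [h1, hform]
    obtain ⟨hW1, hN1⟩ := memW_sobNorm_bilin B hB (hukCD i) hVyCD (hψW i) hVyW
    obtain ⟨hW2, hN2⟩ := memW_sobNorm_bilin B hB hVyCD (hukCD i) hVyW (hψW i)
    have hCD1 : ContDiff ℝ (κ : ℕ∞) (fun x => B (σ i • ψ i x) (Vy x)) :=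
      B.isBoundedBilinearMap.contDiff.comp ((hukCD i).prodMk hVyCD)
    have hCD2 : ContDiff ℝ (κ : ℕ∞) (fun x => B (Vy x) (σ i • ψ i x)) :=
      B.isBoundedBilinearMap.contDiff.comp (hVyCD.prodMk (hukCD i))
    obtain ⟨_, hNsum⟩ := memW_add hCD1 hCD2 hW1 hW2
    refine le_trans hNsum ?_
    rw [hsuk i] at hN1 hN2
    rw [hprod]
    have e1 : γ i * sobNorm κ ⊤ μ Vy ≤ γ i * cγ := mul_le_mul_of_nonneg_left hVyNle (hγk0 i)
    have e2 : sobNorm κ ⊤ μ Vy * γ i ≤ cγ * γ i := mul_le_mul_of_nonneg_right hVyNle (hγk0 i)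
    have e3 : 2 * (cγ * γ i) ≤ cγ * (cγ * γ i) :=
      mul_le_mul_of_nonneg_right hcγ2 (mul_nonneg hcγ0 (hγk0 i))
    nlinarith [hN1, hN2, e1, e2, e3]
  · -- |α| = 2
    have hprod : (∏ k, γ k ^ α k) = γ i * γ j := by
      have hcnt : ∀ k, α k = List.count k [i, j] := fun k => by rw [← count_canonList α k, h2]
      calc (∏ k, γ k ^ α k) = ∏ k, γ k ^ List.count k [i, j] :=
            Finset.prod_congr rfl (fun k _ => by rw [hcnt k])
        _ = ([i, j].map γ).prod := prod_pow_count γ [i, j]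
        _ = γ i * γ j := by simp
    have hform : (fun x => dseq [i, j]
          (fun y' => B (Wfun (ψ₀ x) (fun k => σ k • ψ k x) y')
            (Wfun (ψ₀ x) (fun k => σ k • ψ k x) y')) y)
        = fun x => B (σ j • ψ j x) (σ i • ψ i x) + B (σ i • ψ i x) (σ j • ψ j x) :=
      funext fun x => congrFun (dseq_two B (ψ₀ x) (fun k => σ k • ψ k x) i j) y
    rw [h2, hform]
    obtain ⟨hW1, hN1⟩ := memW_sobNorm_bilin B hB (hukCD j) (hukCD i) (hψW j) (hψW i)
    obtain ⟨hW2, hN2⟩ := memW_sobNorm_bilin B hB (hukCD i) (hukCD j) (hψW i) (hψW j)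
    have hCD1 : ContDiff ℝ (κ : ℕ∞) (fun x => B (σ j • ψ j x) (σ i • ψ i x)) :=
      B.isBoundedBilinearMap.contDiff.comp ((hukCD j).prodMk (hukCD i))
    have hCD2 : ContDiff ℝ (κ : ℕ∞) (fun x => B (σ i • ψ i x) (σ j • ψ j x)) :=
      B.isBoundedBilinearMap.contDiff.comp ((hukCD i).prodMk (hukCD j))
    obtain ⟨_, hNsum⟩ := memW_add hCD1 hCD2 hW1 hW2
    refine le_trans hNsum ?_
    rw [hsuk i, hsuk j] at hN1 hN2
    rw [hprod]
    have hp : 0 ≤ γ i * γ j := mul_nonneg (hγk0 i) (hγk0 j)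
    have h4 : (2:ℝ) ≤ cγ * cγ := by nlinarith [hcγ2, hcγ0]
    have e3 : 2 * (γ i * γ j) ≤ (cγ * cγ) * (γ i * γ j) := mul_le_mul_of_nonneg_right h4 hp
    nlinarith [hN1, hN2, e3]
  · -- |α| ≥ 3
    have hform : (fun x => dseq (t ++ [i, j, k])
          (fun y' => B (Wfun (ψ₀ x) (fun k => σ k • ψ k x) y')
            (Wfun (ψ₀ x) (fun k => σ k • ψ k x) y')) y)
        = fun _ => (0 : X) :=
      funext fun x => congrFun (dseq_ge3 B (ψ₀ x) (fun k => σ k • ψ k x) t i j k) y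
    rw [h3, hform, sobNorm_zero]
    exact hRHS0

end BCAux
/-- Parametric regularity of `B[y](x) = V[y](x)V[y](x)^T`
(modelled as the rank-one operator `w ↦ ⟪V,w⟫ V` on Euclidean space, whose operator
norm is the spectral norm) and `C[y](x) = V[y](x)^T V[y](x) = ⟪V,V⟫`, where
`V[y](x) = ψ₀(x) + ∑_k σ_k ψ_k(x) y_k` is the (finite-rank) Karhunen–Loève expansion:
for every multi-index `α ∈ ℕ^M`,
`⦀∂_y^α B⦀_{κ,∞,D} ≤ c_{γ_κ}² γ_κ^α` and `⦀∂_y^α C⦀_{κ,∞,D} ≤ c_{γ_κ}² γ_κ^α`. -/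
theorem BC_parametric_bounds
    (d mM κ : ℕ) (hd : 1 ≤ d) (hκ : 1 ≤ κ)
    (D : Set (Euc d)) (hDopen : IsOpen D) (hDbdd : Bornology.IsBounded D)
    (P : Measure (Euc mM)) [IsProbabilityMeasure P] (hP : P (box mM)ᶜ = 0)
    (ψ₀ : Euc d → Euc d) (ψ : Fin mM → Euc d → Euc d) (σ : Fin mM → ℝ)
    (hψ₀ : ContDiff ℝ (κ : ℕ∞) ψ₀) (hψ : ∀ k, ContDiff ℝ (κ : ℕ∞) (ψ k))
    (hψ₀W : MemW κ ⊤ (volume.restrict D) ψ₀)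
    (hψW : ∀ k, MemW κ ⊤ (volume.restrict D) (fun x => σ k • ψ k x))
    (γ₀ : ℝ) (γ : Fin mM → ℝ)
    (hγ₀ : γ₀ = sobNorm κ ⊤ (volume.restrict D) ψ₀)
    (hγ : ∀ k, γ k = sobNorm κ ⊤ (volume.restrict D) (fun x => σ k • ψ k x))
    (cγ : ℝ) (hcγ : cγ = max (γ₀ + ∑ k, γ k) 2)
    (V : Euc mM → Euc d → Euc d)
    (hV : ∀ y x, V y x = ψ₀ x + ∑ k, (σ k * y k) • ψ k x) :
    (∀ α : Fin mM → ℕ,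
        tnorm κ ⊤ (volume.restrict D) P
            (pyder α (fun y x => (innerSL ℝ (V y x)).smulRight (V y x))) ≤
          cγ ^ 2 * ∏ k, γ k ^ α k) ∧
      (∀ α : Fin mM → ℕ,
        tnorm κ ⊤ (volume.restrict D) P
            (pyder α (fun y x => (⟪V y x, V y x⟫))) ≤
          cγ ^ 2 * ∏ k, γ k ^ α k) := by
  constructor
  · intro α
    have hident : (fun y x => (innerSL ℝ (V y x)).smulRight (V y x))
        = fun y x => ((ContinuousLinearMap.smulRightL ℝ (Euc d) (Euc d)).comp
            (innerSL ℝ (E := Euc d))) (V y x) (V y x) := rfl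
    rw [hident]
    refine BCAux.master hκ D P hP ψ₀ ψ σ hψ₀ hψ hψ₀W hψW γ₀ γ hγ₀ hγ cγ hcγ V hV _ ?_ α
    intro v w
    have h1 : ((ContinuousLinearMap.smulRightL ℝ (Euc d) (Euc d)).comp
        (innerSL ℝ (E := Euc d))) v w = (innerSL ℝ v).smulRight w := rfl
    rw [h1, ContinuousLinearMap.norm_smulRight_apply, innerSL_apply_norm]
  · intro α
    have hident : (fun y x => (⟪V y x, V y x⟫ : ℝ))
        = fun y x => (innerSL ℝ (E := Euc d)) (V y x) (V y x) := rfl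
    rw [hident]
    refine BCAux.master hκ D P hP ψ₀ ψ σ hψ₀ hψ hψ₀W hψW γ₀ γ hγ₀ hγ cγ hcγ V hV _ ?_ α
    intro v w
    rw [Real.norm_eq_abs]
    exact abs_real_inner_le_norm v w

end
end
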